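/- arXiv:0906.3037 — 8 statements merged into one kernel-verified Lean document; each statement's English description precedes it below -/
import Mathlib

section
/- Let ν > 0, γ > 0, d a positive integer, and define α_k = (Γ(k + d/2) / (k! Γ(d/2) Γ(ν))) γ^{2k} ∫_0^∞ e^{-a} a^{ν + d/2 - 1} (a + γ²)^{-k - d/2} da for k ≥ 0. Then each α_k ≥ 0 and ∑_{k=0}^∞ α_k = 1. -/
open Real MeasureTheory Set

lemma hasSum_of_ofReal_tsum {g : ℕ → ℝ} {S : ℝ} (hg : ∀ k, 0 ≤ g k) (hS : 0 ≤ S)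
    (h : ∑' k, ENNReal.ofReal (g k) = ENNReal.ofReal S) : HasSum g S := by
  have hne : ∑' k, ENNReal.ofReal (g k) ≠ ⊤ := by rw [h]; exact ENNReal.ofReal_ne_top
  have h2 := ENNReal.hasSum_toReal hne
  rw [← ENNReal.tsum_toReal_eq (fun k => ENNReal.ofReal_ne_top), h,
    ENNReal.toReal_ofReal hS] at h2
  have heq : (fun k => (ENNReal.ofReal (g k)).toReal) = g :=
    funext fun k => ENNReal.toReal_ofReal (hg k)
  rwa [heq] at h2

lemma binom_hasSum {r x : ℝ} (hr : 0 < r) (hx0 : 0 ≤ x) (hx1 : x < 1) :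
    HasSum (fun k : ℕ => Real.Gamma ((k : ℝ) + r) / (Nat.factorial k : ℝ) * x ^ k)
      (Real.Gamma r * (1 - x) ^ (-r)) := by
  have hc : 0 < 1 - x := by linarith
  apply hasSum_of_ofReal_tsum
  · intro k
    have := Real.Gamma_pos_of_pos (show (0:ℝ) < (k:ℝ) + r by positivity)
    positivity
  · have := Real.Gamma_pos_of_pos hr
    positivity
  have h1 : ∀ k : ℕ, ENNReal.ofReal (Real.Gamma ((k : ℝ) + r) / (Nat.factorial k : ℝ) * x ^ k)
      = ∫⁻ t in Ioi (0:ℝ), ENNReal.ofReal (x ^ k / (Nat.factorial k : ℝ) *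
        (Real.exp (-t) * t ^ ((k : ℝ) + r - 1))) := by
    intro k
    have hkr : (0:ℝ) < (k : ℝ) + r := by positivity
    have hint : Integrable (fun t : ℝ => x ^ k / (Nat.factorial k : ℝ) *
        (Real.exp (-t) * t ^ ((k : ℝ) + r - 1))) (volume.restrict (Ioi 0)) :=
      (Real.GammaIntegral_convergent hkr).const_mul _
    rw [← ofReal_integral_eq_lintegral_ofReal hint]
    · congr 1
      rw [integral_const_mul, ← Real.Gamma_eq_integral hkr]
      ring
    · filter_upwards [ae_restrict_mem measurableSet_Ioi] with t ht
      have ht' : 0 < t := ht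
      positivity
  calc ∑' k : ℕ, ENNReal.ofReal (Real.Gamma ((k : ℝ) + r) / (Nat.factorial k : ℝ) * x ^ k)
      = ∑' k : ℕ, ∫⁻ t in Ioi (0:ℝ), ENNReal.ofReal (x ^ k / (Nat.factorial k : ℝ) *
          (Real.exp (-t) * t ^ ((k : ℝ) + r - 1))) := by simp_rw [h1]
    _ = ∫⁻ t in Ioi (0:ℝ), ∑' k : ℕ, ENNReal.ofReal (x ^ k / (Nat.factorial k : ℝ) *
          (Real.exp (-t) * t ^ ((k : ℝ) + r - 1))) := by
        rw [lintegral_tsum]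
        intro k
        apply Measurable.aemeasurable
        fun_prop
    _ = ∫⁻ t in Ioi (0:ℝ), ENNReal.ofReal (t ^ (r - 1) * Real.exp (-((1 - x) * t))) := by
        apply setLIntegral_congr_fun measurableSet_Ioi
        intro t ht; dsimp only
        have ht' : 0 < t := ht
        have hterm : ∀ k : ℕ, x ^ k / (Nat.factorial k : ℝ) *
            (Real.exp (-t) * t ^ ((k : ℝ) + r - 1))
            = (x * t) ^ k / (Nat.factorial k : ℝ) * (Real.exp (-t) * t ^ (r - 1)) := by
          intro k
          rw [show (k : ℝ) + r - 1 = (k : ℝ) + (r - 1) by ring, Real.rpow_add ht',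
            Real.rpow_natCast, mul_pow]
          ring
        have hsum : HasSum (fun k : ℕ => x ^ k / (Nat.factorial k : ℝ) *
            (Real.exp (-t) * t ^ ((k : ℝ) + r - 1))) (t ^ (r - 1) * Real.exp (-((1 - x) * t))) := by
          have he := NormedSpace.expSeries_div_hasSum_exp (x * t)
          rw [← Real.exp_eq_exp_ℝ] at he
          have := he.mul_right (Real.exp (-t) * t ^ (r - 1))
          simp_rw [← hterm] at this
          convert this using 1 <;> try rfl
          have hE : rexp (x * t) * rexp (-t) = rexp (-((1 - x) * t)) := by
            rw [← Real.exp_add]; ring_nf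
          rw [← mul_assoc, hE, mul_comm]
        rw [← ENNReal.ofReal_tsum_of_nonneg (fun k => by positivity) hsum.summable,
          hsum.tsum_eq]
    _ = ENNReal.ofReal (Real.Gamma r * (1 - x) ^ (-r)) := by
        have hint2 : Integrable (fun t : ℝ => t ^ (r - 1) * Real.exp (-((1 - x) * t)))
            (volume.restrict (Ioi 0)) := by
          have h3 := integrableOn_rpow_mul_exp_neg_mul_rpow (p := 1) (s := r - 1) (b := 1 - x)
            (by linarith) one_pos hc
          simp only [Real.rpow_one] at h3
          exact h3.congr (Filter.Eventually.of_forall fun t => by norm_num; left; ring)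
        rw [← ofReal_integral_eq_lintegral_ofReal hint2]
        · rw [integral_rpow_mul_exp_neg_mul_Ioi hr hc]
          rw [one_div, Real.inv_rpow hc.le, ← Real.rpow_neg hc.le, mul_comm]
        · filter_upwards [ae_restrict_mem measurableSet_Ioi] with t ht
          have ht' : 0 < t := ht
          positivity


theorem alpha_nonneg_sum_one (ν γ : ℝ) (hν : 0 < ν) (hγ : 0 < γ) (d : ℕ) (hd : 1 ≤ d)
    (α : ℕ → ℝ)
    (hα : ∀ k : ℕ, α k =
      Real.Gamma ((k : ℝ) + (d : ℝ) / 2) /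
          ((Nat.factorial k : ℝ) * Real.Gamma ((d : ℝ) / 2) * Real.Gamma ν) *
        γ ^ (2 * k) *
        ∫ a in Set.Ioi (0 : ℝ),
          Real.exp (-a) * a ^ (ν + (d : ℝ) / 2 - 1) * (a + γ ^ 2) ^ (-(k : ℝ) - (d : ℝ) / 2)) :
    (∀ k, 0 ≤ α k) ∧ HasSum α 1 := by
  set r : ℝ := (d : ℝ) / 2 with hrdef
  have hr : 0 < r := by
    have : (1:ℝ) ≤ (d:ℝ) := by exact_mod_cast hd
    rw [hrdef]; linarith
  have hΓr : 0 < Real.Gamma r := Real.Gamma_pos_of_pos hr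
  have hΓν : 0 < Real.Gamma ν := Real.Gamma_pos_of_pos hν
  -- nonnegativity
  have hnonneg : ∀ k, 0 ≤ α k := by
    intro k
    rw [hα k]
    have hI : 0 ≤ ∫ a in Ioi (0:ℝ),
        Real.exp (-a) * a ^ (ν + r - 1) * (a + γ ^ 2) ^ (-(k : ℝ) - r) := by
      apply setIntegral_nonneg measurableSet_Ioi
      intro a ha
      have ha' : 0 < a := ha
      positivity
    have hΓk : 0 < Real.Gamma ((k : ℝ) + r) := Real.Gamma_pos_of_pos (by positivity)
    positivity
  refine ⟨hnonneg, ?_⟩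
  apply hasSum_of_ofReal_tsum hnonneg zero_le_one
  rw [show ENNReal.ofReal (1:ℝ) = 1 from ENNReal.ofReal_one]
  -- the integrand as a function
  set h : ℕ → ℝ → ℝ := fun k a =>
    Real.Gamma ((k : ℝ) + r) / ((Nat.factorial k : ℝ) * Real.Gamma r * Real.Gamma ν) *
      γ ^ (2 * k) * (Real.exp (-a) * a ^ (ν + r - 1) * (a + γ ^ 2) ^ (-(k : ℝ) - r)) with hhdef
  -- integrability of each term
  have hint : ∀ k : ℕ, Integrable (h k) (volume.restrict (Ioi 0)) := by
    intro k
    have hbase : IntegrableOn (fun a : ℝ => Real.exp (-a) * a ^ (ν + r - 1)) (Ioi 0) := by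
      have := Real.GammaIntegral_convergent (by positivity : (0:ℝ) < ν + r)
      simpa using this
    have hbound : Integrable (fun a : ℝ =>
        |Real.Gamma ((k : ℝ) + r) / ((Nat.factorial k : ℝ) * Real.Gamma r * Real.Gamma ν) *
          γ ^ (2 * k)| * ((γ ^ 2) ^ (-(k : ℝ) - r) * (Real.exp (-a) * a ^ (ν + r - 1))))
        (volume.restrict (Ioi 0)) := (hbase.const_mul _).const_mul _
    apply hbound.mono'
    · apply Measurable.aestronglyMeasurable
      fun_prop
    · filter_upwards [ae_restrict_mem measurableSet_Ioi] with a ha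
      have ha' : 0 < a := ha
      have hA : (0:ℝ) < a + γ ^ 2 := by positivity
      have key : (a + γ ^ 2) ^ (-(k : ℝ) - r) ≤ (γ ^ 2) ^ (-(k : ℝ) - r) := by
        apply Real.rpow_le_rpow_of_nonpos (by positivity) (by linarith)
        have : (0:ℝ) ≤ (k:ℝ) := Nat.cast_nonneg k
        linarith
      rw [hhdef]
      simp only [Real.norm_eq_abs]
      rw [abs_mul, abs_of_nonneg (by positivity : (0:ℝ) ≤
        Real.exp (-a) * a ^ (ν + r - 1) * (a + γ ^ 2) ^ (-(k : ℝ) - r))]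
      apply mul_le_mul_of_nonneg_left _ (abs_nonneg _)
      rw [mul_comm ((γ ^ 2) ^ (-(k : ℝ) - r)) _]
      exact mul_le_mul_of_nonneg_left key (by positivity)
  -- each α k as a lower integral
  have h1 : ∀ k : ℕ, ENNReal.ofReal (α k) = ∫⁻ a in Ioi (0:ℝ), ENNReal.ofReal (h k a) := by
    intro k
    rw [← ofReal_integral_eq_lintegral_ofReal (hint k)]
    · congr 1
      rw [hα k, hhdef]
      simp only
      rw [integral_const_mul]
    · filter_upwards [ae_restrict_mem measurableSet_Ioi] with a ha
      have ha' : 0 < a := ha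
      have hΓk : 0 < Real.Gamma ((k : ℝ) + r) := Real.Gamma_pos_of_pos (by positivity)
      rw [hhdef]
      positivity
  calc ∑' k : ℕ, ENNReal.ofReal (α k)
      = ∑' k : ℕ, ∫⁻ a in Ioi (0:ℝ), ENNReal.ofReal (h k a) := by simp_rw [h1]
    _ = ∫⁻ a in Ioi (0:ℝ), ∑' k : ℕ, ENNReal.ofReal (h k a) := by
        rw [lintegral_tsum]
        intro k
        apply Measurable.aemeasurable
        rw [hhdef]
        fun_prop
    _ = ∫⁻ a in Ioi (0:ℝ), ENNReal.ofReal (Real.exp (-a) * a ^ (ν - 1) / Real.Gamma ν) := by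
        apply setLIntegral_congr_fun measurableSet_Ioi
        intro a ha; dsimp only
        have ha' : 0 < a := ha
        have hA : (0:ℝ) < a + γ ^ 2 := by positivity
        set x : ℝ := γ ^ 2 / (a + γ ^ 2) with hxdef
        have hx0 : 0 ≤ x := by positivity
        have hx1 : x < 1 := by
          rw [hxdef, div_lt_one hA]
          linarith
        set D : ℝ := Real.exp (-a) * a ^ (ν + r - 1) * (a + γ ^ 2) ^ (-r) /
          (Real.Gamma r * Real.Gamma ν) with hDdef
        have hterm : ∀ k : ℕ, h k a =
            Real.Gamma ((k : ℝ) + r) / (Nat.factorial k : ℝ) * x ^ k * D := by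
          intro k
          have hAk : ((a + γ ^ 2) ^ k : ℝ) ≠ 0 := by positivity
          have hsplit : (a + γ ^ 2) ^ (-(k : ℝ) - r)
              = ((a + γ ^ 2) ^ k)⁻¹ * (a + γ ^ 2) ^ (-r) := by
            rw [show -(k : ℝ) - r = -(k : ℝ) + (-r) by ring, Real.rpow_add hA,
              Real.rpow_neg hA.le ((k : ℝ)), Real.rpow_natCast]
          rw [hhdef, hDdef]
          simp only
          rw [hsplit, hxdef, div_pow, pow_mul]
          field_simp
        have hsum : HasSum (fun k : ℕ => h k a)
            (Real.exp (-a) * a ^ (ν - 1) / Real.Gamma ν) := by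
          have B := (binom_hasSum hr hx0 hx1).mul_right D
          simp_rw [← hterm] at B
          convert B using 1 <;> try rfl
          -- value computation
          have h1x : 1 - x = a / (a + γ ^ 2) := by
            rw [hxdef]; field_simp; ring
          have har : (a : ℝ) ^ r ≠ 0 := by positivity
          have hAr : ((a + γ ^ 2) : ℝ) ^ r ≠ 0 := by positivity
          rw [hDdef, h1x, Real.rpow_neg (by positivity), Real.div_rpow ha'.le hA.le, inv_div]
          rw [show ν + r - 1 = (ν - 1) + r by ring, Real.rpow_add ha',
            Real.rpow_neg hA.le]
          field_simp
        rw [← ENNReal.ofReal_tsum_of_nonneg, hsum.tsum_eq]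
        · intro k
          have hΓk : 0 < Real.Gamma ((k : ℝ) + r) := Real.Gamma_pos_of_pos (by positivity)
          rw [hhdef]
          positivity
        · exact hsum.summable
    _ = 1 := by
        have hint2 : Integrable (fun a : ℝ => Real.exp (-a) * a ^ (ν - 1) / Real.Gamma ν)
            (volume.restrict (Ioi 0)) := (Real.GammaIntegral_convergent hν).div_const _
        rw [← ofReal_integral_eq_lintegral_ofReal hint2]
        · rw [integral_div, ← Real.Gamma_eq_integral hν, div_self hΓν.ne', ENNReal.ofReal_one]
        · filter_upwards [ae_restrict_mem measurableSet_Ioi] with a ha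
          have ha' : 0 < a := ha
          positivity
end

section
/- Let ν > 1, γ > 0, d a positive integer, and let α_k be as in the mixing distribution: α_k = (Γ(k + d/2)/(k! Γ(d/2) Γ(ν))) γ^{2k} ∫_0^∞ e^{-a} a^{ν+d/2-1} (a+γ²)^{-k-d/2} da. Then ∑_{k=0}^∞ k·α_k = d γ² / (2(ν-1)). -/
open Real MeasureTheory Set

lemma nb_integrand_integrable (r b : ℝ) (hr : 0 < r) (hb : 0 < b) :
    IntegrableOn (fun t : ℝ => t ^ (r - 1) * Real.exp (-(b * t))) (Ioi 0) := by
  have := integrableOn_rpow_mul_exp_neg_mul_rpow (p := 1) (s := r - 1) (b := b)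
    (by linarith) one_pos hb
  refine this.congr_fun (fun t ht => ?_) measurableSet_Ioi
  simp only [Real.rpow_one, neg_mul]

lemma nb_sum (r x : ℝ) (hr : 0 < r) (hx0 : 0 ≤ x) (hx1 : x < 1) :
    ∑' k : ℕ, ENNReal.ofReal (Real.Gamma ((k : ℝ) + r) / (Nat.factorial k : ℝ) * x ^ k)
      = ENNReal.ofReal (Real.Gamma r * (1 - x) ^ (-r)) := by
  have hb : 0 < 1 - x := by linarith
  -- each term as an integral
  have hterm : ∀ k : ℕ, Real.Gamma ((k : ℝ) + r) / (Nat.factorial k : ℝ) * x ^ k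
      = ∫ t in Ioi (0:ℝ), Real.exp (-t) * t ^ ((k : ℝ) + r - 1) * (x ^ k / (Nat.factorial k : ℝ)) := by
    intro k
    rw [MeasureTheory.integral_mul_const, ← Real.Gamma_eq_integral (by positivity)]
    ring
  have hint : ∀ k : ℕ, IntegrableOn
      (fun t : ℝ => Real.exp (-t) * t ^ ((k : ℝ) + r - 1) * (x ^ k / (Nat.factorial k : ℝ)))
      (Ioi 0) := fun k => (Real.GammaIntegral_convergent (by positivity)).mul_const _
  calc ∑' k : ℕ, ENNReal.ofReal (Real.Gamma ((k : ℝ) + r) / (Nat.factorial k : ℝ) * x ^ k)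
      = ∑' k : ℕ, ∫⁻ t in Ioi (0:ℝ), ENNReal.ofReal
          (Real.exp (-t) * t ^ ((k : ℝ) + r - 1) * (x ^ k / (Nat.factorial k : ℝ))) := by
        refine tsum_congr fun k => ?_
        rw [hterm k, MeasureTheory.ofReal_integral_eq_lintegral_ofReal (hint k)]
        refine (ae_restrict_iff' measurableSet_Ioi).2 (Filter.Eventually.of_forall fun t ht => ?_)
        have ht : (0:ℝ) < t := ht
        positivity
    _ = ∫⁻ t in Ioi (0:ℝ), ∑' k : ℕ, ENNReal.ofReal
          (Real.exp (-t) * t ^ ((k : ℝ) + r - 1) * (x ^ k / (Nat.factorial k : ℝ))) := by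
        rw [← MeasureTheory.lintegral_tsum]
        intro k
        refine (ENNReal.measurable_ofReal.comp_aemeasurable ?_)
        refine ContinuousOn.aemeasurable ?_ measurableSet_Ioi
        refine ContinuousOn.mul (ContinuousOn.mul ?_ ?_) continuousOn_const
        · exact (Real.continuous_exp.comp continuous_neg).continuousOn
        · exact continuousOn_id.rpow_const fun t ht => Or.inl (ne_of_gt ht)
    _ = ∫⁻ t in Ioi (0:ℝ), ENNReal.ofReal (t ^ (r - 1) * Real.exp (-((1 - x) * t))) := by
        refine setLIntegral_congr_fun measurableSet_Ioi
          (fun t ht => ?_)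
        have ht : (0:ℝ) < t := ht
        have h1 : ∀ k : ℕ, Real.exp (-t) * t ^ ((k : ℝ) + r - 1) * (x ^ k / (Nat.factorial k : ℝ))
            = (Real.exp (-t) * t ^ (r - 1)) * ((x * t) ^ k / (Nat.factorial k : ℝ)) := by
          intro k
          have : t ^ ((k : ℝ) + r - 1) = t ^ (k : ℕ) * t ^ (r - 1) := by
            rw [← Real.rpow_natCast t k, ← Real.rpow_add ht]; ring_nf
          rw [this, mul_pow]; ring
        simp_rw [h1]
        rw [← ENNReal.ofReal_tsum_of_nonneg (fun k => by positivity)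
          (((Real.summable_pow_div_factorial (x * t)).mul_left _))]
        congr 1
        rw [tsum_mul_left]
        have : ∑' k : ℕ, (x * t) ^ k / (Nat.factorial k : ℝ) = Real.exp (x * t) := by
          rw [Real.exp_eq_exp_ℝ, NormedSpace.exp_eq_tsum_div]
        rw [this, mul_comm (Real.exp (-t)) (t ^ (r - 1)), mul_assoc, ← Real.exp_add]
        ring_nf
    _ = ENNReal.ofReal (Real.Gamma r * (1 - x) ^ (-r)) := by
        rw [← MeasureTheory.ofReal_integral_eq_lintegral_ofReal
          (nb_integrand_integrable r (1 - x) hr hb)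
          ((ae_restrict_iff' measurableSet_Ioi).2 (Filter.Eventually.of_forall fun t ht => by
            have ht : (0:ℝ) < t := ht; positivity))]
        rw [integral_rpow_mul_exp_neg_mul_Ioi hr hb]
        congr 1
        rw [Real.rpow_neg hb.le, ← Real.inv_rpow hb.le, one_div, mul_comm]

lemma nb_sum' (r x : ℝ) (hr : 0 < r) (hx0 : 0 ≤ x) (hx1 : x < 1) :
    ∑' k : ℕ, ENNReal.ofReal ((k : ℝ) * (Real.Gamma ((k : ℝ) + r) / (Nat.factorial k : ℝ) * x ^ k))
      = ENNReal.ofReal (Real.Gamma (r + 1) * (x * (1 - x) ^ (-r - 1))) := by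
  rw [tsum_eq_zero_add' ENNReal.summable]
  simp only [Nat.cast_zero, zero_mul, ENNReal.ofReal_zero, zero_add]
  have h : ∀ j : ℕ, ((j + 1 : ℕ) : ℝ) *
        (Real.Gamma (((j + 1 : ℕ) : ℝ) + r) / (Nat.factorial (j + 1) : ℝ) * x ^ (j + 1))
      = x * (Real.Gamma ((j : ℝ) + (r + 1)) / (Nat.factorial j : ℝ) * x ^ j) := by
    intro j
    have hfac : (Nat.factorial (j + 1) : ℝ) = ((j : ℝ) + 1) * (Nat.factorial j : ℝ) := by
      rw [Nat.factorial_succ]; push_cast; ring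
    have hg : ((j + 1 : ℕ) : ℝ) + r = (j : ℝ) + (r + 1) := by push_cast; ring
    have hj : ((j : ℝ) + 1) ≠ 0 := by positivity
    have hf : (Nat.factorial j : ℝ) ≠ 0 := by positivity
    rw [hg, hfac, pow_succ, Nat.cast_add, Nat.cast_one]
    rw [div_mul_eq_div_div_swap, mul_comm ((j : ℝ) + 1)]
    field_simp
  simp_rw [h, ENNReal.ofReal_mul hx0]
  rw [ENNReal.tsum_mul_left, nb_sum (r + 1) x (by linarith) hx0 hx1, ← ENNReal.ofReal_mul hx0]
  congr 1
  rw [show -(r + 1) = -r - 1 by ring]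
  ring

theorem alpha_mean (ν γ : ℝ) (hν : 1 < ν) (hγ : 0 < γ) (d : ℕ) (hd : 1 ≤ d)
    (α : ℕ → ℝ)
    (hα : ∀ k : ℕ, α k =
      Real.Gamma ((k : ℝ) + (d : ℝ) / 2) /
          ((Nat.factorial k : ℝ) * Real.Gamma ((d : ℝ) / 2) * Real.Gamma ν) *
        γ ^ (2 * k) *
        ∫ a in Set.Ioi (0 : ℝ),
          Real.exp (-a) * a ^ (ν + (d : ℝ) / 2 - 1) * (a + γ ^ 2) ^ (-(k : ℝ) - (d : ℝ) / 2)) :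
    ∑' k : ℕ, (k : ℝ) * α k = (d : ℝ) * γ ^ 2 / (2 * (ν - 1)) := by
  have hd0 : (0:ℝ) < (d:ℝ) := by exact_mod_cast Nat.lt_of_lt_of_le Nat.zero_lt_one hd
  have hr : (0:ℝ) < (d:ℝ) / 2 := by linarith
  have hγ2 : (0:ℝ) < γ ^ 2 := by positivity
  have hν1 : (0:ℝ) < ν - 1 := by linarith
  set r : ℝ := (d : ℝ) / 2 with hr_def
  -- the integrand for k α k
  set F : ℕ → ℝ → ℝ := fun k a =>
    (k : ℝ) * (Real.Gamma ((k : ℝ) + r) /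
        ((Nat.factorial k : ℝ) * Real.Gamma r * Real.Gamma ν) * γ ^ (2 * k)) *
      (Real.exp (-a) * a ^ (ν + r - 1) * (a + γ ^ 2) ^ (-(k : ℝ) - r)) with hF_def
  -- integrability of the base integrand
  have hmeas : ∀ k : ℕ, AEStronglyMeasurable (F k) (volume.restrict (Set.Ioi (0:ℝ))) := by
    intro k
    refine ContinuousOn.aestronglyMeasurable ?_ measurableSet_Ioi
    refine continuousOn_const.mul (ContinuousOn.mul (ContinuousOn.mul ?_ ?_) ?_)
    · exact (Real.continuous_exp.comp continuous_neg).continuousOn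
    · exact continuousOn_id.rpow_const fun a ha => Or.inl (ne_of_gt ha)
    · refine (continuous_id.add continuous_const).continuousOn.rpow_const fun a ha => Or.inl ?_
      have ha : (0:ℝ) < a := ha
      show a + γ ^ 2 ≠ 0; positivity
  have hFnn : ∀ k : ℕ, ∀ a ∈ Set.Ioi (0:ℝ), 0 ≤ F k a := by
    intro k a ha
    have ha : (0:ℝ) < a := ha
    have h1 : 0 < Real.Gamma ((k : ℝ) + r) := Real.Gamma_pos_of_pos (by positivity)
    have h2 : 0 < Real.Gamma r := Real.Gamma_pos_of_pos hr
    have h3 : 0 < Real.Gamma ν := Real.Gamma_pos_of_pos (by linarith)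
    have h4 : (0:ℝ) < Nat.factorial k := by exact_mod_cast k.factorial_pos
    simp only [hF_def]
    refine mul_nonneg (mul_nonneg (Nat.cast_nonneg k) ?_) ?_
    · exact mul_nonneg (div_nonneg h1.le (mul_pos (mul_pos h4 h2) h3).le) (by positivity)
    · exact mul_nonneg (mul_nonneg (Real.exp_pos _).le (Real.rpow_nonneg ha.le _))
        (Real.rpow_nonneg (by positivity) _)
  have hFint : ∀ k : ℕ, IntegrableOn (F k) (Set.Ioi (0:ℝ)) := by
    intro k
    set C : ℝ := (k : ℝ) * (Real.Gamma ((k : ℝ) + r) /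
        ((Nat.factorial k : ℝ) * Real.Gamma r * Real.Gamma ν) * γ ^ (2 * k))
    have hbase : IntegrableOn
        (fun a : ℝ => |C| * (γ ^ 2) ^ (-(k : ℝ) - r) * (Real.exp (-a) * a ^ (ν + r - 1)))
        (Set.Ioi (0:ℝ)) :=
      ((Real.GammaIntegral_convergent (show (0:ℝ) < ν + r by linarith)).const_mul _)
    refine Integrable.mono' hbase (hmeas k) ?_
    refine (ae_restrict_iff' measurableSet_Ioi).2 (Filter.Eventually.of_forall fun a ha => ?_)
    have ha : (0:ℝ) < a := ha
    have hb : (0:ℝ) < a + γ ^ 2 := by positivity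
    have hpow : (a + γ ^ 2) ^ (-(k : ℝ) - r) ≤ (γ ^ 2) ^ (-(k : ℝ) - r) := by
      refine Real.rpow_le_rpow_of_nonpos hγ2 (by linarith) ?_
      have : (0:ℝ) ≤ (k : ℝ) := Nat.cast_nonneg k
      linarith
    have hFa : |F k a| = |C| * (Real.exp (-a) * a ^ (ν + r - 1) * (a + γ ^ 2) ^ (-(k : ℝ) - r)) := by
      rw [hF_def, abs_mul, abs_of_nonneg (by positivity :
        (0:ℝ) ≤ Real.exp (-a) * a ^ (ν + r - 1) * (a + γ ^ 2) ^ (-(k : ℝ) - r))]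
    rw [Real.norm_eq_abs, hFa]
    have h1 : (0:ℝ) ≤ Real.exp (-a) * a ^ (ν + r - 1) := by positivity
    calc |C| * (Real.exp (-a) * a ^ (ν + r - 1) * (a + γ ^ 2) ^ (-(k : ℝ) - r))
        ≤ |C| * (Real.exp (-a) * a ^ (ν + r - 1) * (γ ^ 2) ^ (-(k : ℝ) - r)) := by
          refine mul_le_mul_of_nonneg_left ?_ (abs_nonneg _)
          exact mul_le_mul_of_nonneg_left hpow h1
      _ = |C| * (γ ^ 2) ^ (-(k : ℝ) - r) * (Real.exp (-a) * a ^ (ν + r - 1)) := by ring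
  -- k * α k as an integral of F k
  have h1 : ∀ k : ℕ, (k : ℝ) * α k = ∫ a in Set.Ioi (0:ℝ), F k a := by
    intro k
    rw [hα k, hF_def]
    simp only
    rw [MeasureTheory.integral_const_mul]
    ring
  have hnn : ∀ k : ℕ, 0 ≤ (k : ℝ) * α k := by
    intro k
    rw [h1 k]
    exact setIntegral_nonneg measurableSet_Ioi (hFnn k)
  -- main ENNReal computation
  have key : ∑' k : ℕ, ENNReal.ofReal ((k : ℝ) * α k)
      = ENNReal.ofReal ((d : ℝ) * γ ^ 2 / (2 * (ν - 1))) := by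
    have step1 : ∀ k : ℕ, ENNReal.ofReal ((k : ℝ) * α k)
        = ∫⁻ a in Set.Ioi (0:ℝ), ENNReal.ofReal (F k a) := by
      intro k
      rw [h1 k, MeasureTheory.ofReal_integral_eq_lintegral_ofReal (hFint k)
        ((ae_restrict_iff' measurableSet_Ioi).2 (Filter.Eventually.of_forall (hFnn k)))]
    simp_rw [step1]
    rw [← MeasureTheory.lintegral_tsum (fun k => (hmeas k).aemeasurable.ennreal_ofReal)]
    -- pointwise sum
    have hptwise : ∀ a ∈ Set.Ioi (0:ℝ), ∑' k : ℕ, ENNReal.ofReal (F k a)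
        = ENNReal.ofReal ((d : ℝ) / 2 * γ ^ 2 / Real.Gamma ν * (Real.exp (-a) * a ^ (ν - 2))) := by
      intro a ha
      have ha : (0:ℝ) < a := ha
      have hb : (0:ℝ) < a + γ ^ 2 := by positivity
      set x : ℝ := γ ^ 2 / (a + γ ^ 2) with hx_def
      have hx0 : 0 ≤ x := by positivity
      have hx1 : x < 1 := by rw [hx_def, div_lt_one hb]; linarith
      set D : ℝ := Real.exp (-a) * a ^ (ν + r - 1) * (a + γ ^ 2) ^ (-r) /
        (Real.Gamma r * Real.Gamma ν) with hD_def
      have hD0 : 0 ≤ D := by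
        have h2 : 0 < Real.Gamma r := Real.Gamma_pos_of_pos hr
        have h3 : 0 < Real.Gamma ν := Real.Gamma_pos_of_pos (by linarith)
        rw [hD_def]; positivity
      have hFeq : ∀ k : ℕ, F k a
          = (k : ℝ) * (Real.Gamma ((k : ℝ) + r) / (Nat.factorial k : ℝ) * x ^ k) * D := by
        intro k
        have e1 : (a + γ ^ 2) ^ (-(k : ℝ) - r)
            = ((a + γ ^ 2) ^ k)⁻¹ * (a + γ ^ 2) ^ (-r) := by
          rw [show -(k : ℝ) - r = -(k : ℝ) + (-r) by ring, Real.rpow_add hb,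
            Real.rpow_neg hb.le, Real.rpow_natCast]
        have e2 : γ ^ (2 * k) = (γ ^ 2) ^ k := by rw [pow_mul]
        have e3 : x ^ k = (γ ^ 2) ^ k * ((a + γ ^ 2) ^ k)⁻¹ := by
          rw [hx_def, div_pow, div_eq_mul_inv]
        rw [hF_def, hD_def]
        simp only
        rw [e1, e2, e3]
        ring
      simp_rw [hFeq, ENNReal.ofReal_mul' hD0]
      rw [ENNReal.tsum_mul_right, nb_sum' r x hr hx0 hx1, ← ENNReal.ofReal_mul' hD0]
      congr 1
      -- real algebra
      have h2 : 0 < Real.Gamma r := Real.Gamma_pos_of_pos hr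
      have h3 : 0 < Real.Gamma ν := Real.Gamma_pos_of_pos (by linarith)
      have hone_sub : 1 - x = a / (a + γ ^ 2) := by
        rw [hx_def]; field_simp; ring
      have hpow1 : (1 - x) ^ (-r - 1) = (a + γ ^ 2) ^ (r + 1) / a ^ (r + 1) := by
        rw [hone_sub, show -r - 1 = -(r + 1) by ring, Real.rpow_neg (by positivity),
          Real.div_rpow ha.le hb.le, inv_div]
      have hpow2 : a ^ (ν + r - 1) = a ^ (ν - 2) * a ^ (r + 1) := by
        rw [← Real.rpow_add ha]; ring_nf
      have hpow3 : (a + γ ^ 2) ^ (r + 1) = (a + γ ^ 2) ^ r * (a + γ ^ 2) := by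
        rw [Real.rpow_add hb, Real.rpow_one]
      have hpow4 : (a + γ ^ 2) ^ (-r) = ((a + γ ^ 2) ^ r)⁻¹ := Real.rpow_neg hb.le r
      have hΓ : Real.Gamma (r + 1) = r * Real.Gamma r := Real.Gamma_add_one (ne_of_gt hr)
      rw [hD_def, hΓ, hpow1, hpow2, hpow3, hpow4, hx_def]
      have har : (0:ℝ) < a ^ (r + 1) := Real.rpow_pos_of_pos ha _
      have hbr : (0:ℝ) < (a + γ ^ 2) ^ r := Real.rpow_pos_of_pos hb _
      field_simp
      ring
    rw [setLIntegral_congr_fun measurableSet_Ioi hptwise]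
    -- final Gamma integral
    have hC0 : (0:ℝ) ≤ (d : ℝ) / 2 * γ ^ 2 / Real.Gamma ν := by
      have h3 : 0 < Real.Gamma ν := Real.Gamma_pos_of_pos (by linarith)
      positivity
    simp_rw [ENNReal.ofReal_mul hC0]
    rw [MeasureTheory.lintegral_const_mul' _ _ ENNReal.ofReal_ne_top]
    have hint2 : IntegrableOn (fun a : ℝ => Real.exp (-a) * a ^ (ν - 2)) (Set.Ioi (0:ℝ)) := by
      have := Real.GammaIntegral_convergent hν1
      refine this.congr_fun (fun a ha => ?_) measurableSet_Ioi
      rw [show ν - 1 - 1 = ν - 2 by ring]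
    rw [← MeasureTheory.ofReal_integral_eq_lintegral_ofReal hint2
      ((ae_restrict_iff' measurableSet_Ioi).2 (Filter.Eventually.of_forall fun a ha => by
        have ha : (0:ℝ) < a := ha; positivity))]
    have hΓν1 : ∫ a in Set.Ioi (0:ℝ), Real.exp (-a) * a ^ (ν - 2) = Real.Gamma (ν - 1) := by
      rw [Real.Gamma_eq_integral hν1, show ν - 1 - 1 = ν - 2 by ring]
    rw [hΓν1, ← ENNReal.ofReal_mul hC0]
    congr 1
    have hΓsub : Real.Gamma ν = (ν - 1) * Real.Gamma (ν - 1) := by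
      have := Real.Gamma_add_one (ne_of_gt hν1)
      rw [sub_add_cancel] at this
      exact this
    have hΓν1pos : 0 < Real.Gamma (ν - 1) := Real.Gamma_pos_of_pos hν1
    rw [hΓsub]
    field_simp
  -- conclude
  calc ∑' k : ℕ, (k : ℝ) * α k
      = (∑' k : ℕ, ENNReal.ofReal ((k : ℝ) * α k)).toReal := by
        rw [ENNReal.tsum_toReal_eq (fun k => ENNReal.ofReal_ne_top)]
        exact tsum_congr fun k => (ENNReal.toReal_ofReal (hnn k)).symm
    _ = (d : ℝ) * γ ^ 2 / (2 * (ν - 1)) := by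
        rw [key, ENNReal.toReal_ofReal (by positivity)]
end

section
/- Let ν, μ > 0, d a positive integer, and define c_n = (1/B(ν,μ)) ((d/2)_n / n!) ∫_0^1 t^{μ+d/2-1} (1-t)^{ν+d/2-1} (1 - t + t²)^n dt for n ≥ 0. Then each c_n ≥ 0 and ∑_{n=0}^∞ c_n = 1. -/
open Real MeasureTheory Filter Finset Topology

noncomputable def gcoef (a : ℝ) (n : ℕ) : ℝ :=
  (ascPochhammer ℝ n).eval a / (Nat.factorial n : ℝ)

lemma gcoef_zero (a : ℝ) : gcoef a 0 = 1 := by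
  simp [gcoef]

lemma gcoef_succ (a : ℝ) (n : ℕ) :
    gcoef a (n + 1) = gcoef a n * ((a + n) / (n + 1)) := by
  unfold gcoef
  rw [ascPochhammer_succ_right, Nat.factorial_succ]
  have : (ascPochhammer ℝ n * (Polynomial.X + (n : Polynomial ℝ))).eval a
      = (ascPochhammer ℝ n).eval a * (a + n) := by
    rw [Polynomial.eval_mul, Polynomial.eval_add, Polynomial.eval_X, Polynomial.eval_natCast]
  have hf : (Nat.factorial n : ℝ) ≠ 0 := Nat.cast_ne_zero.mpr (Nat.factorial_ne_zero n)
  have hn : ((n:ℝ) + 1) ≠ 0 := by positivity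
  rw [this]
  push_cast
  field_simp

lemma gcoef_nonneg {a : ℝ} (ha : 0 ≤ a) (n : ℕ) : 0 ≤ gcoef a n := by
  induction n with
  | zero => simp [gcoef_zero]
  | succ n ih =>
    rw [gcoef_succ]
    have : (0:ℝ) ≤ (a + n) / (n + 1) := by positivity
    exact mul_nonneg ih this

lemma gcoef_one (n : ℕ) : gcoef 1 n = 1 := by
  unfold gcoef
  rw [ascPochhammer_eval_one]
  field_simp

lemma summable_gcoef_mul_pow {a x : ℝ} (ha : 0 ≤ a) (hx0 : 0 ≤ x) (hx1 : x < 1) :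
    Summable (fun n => gcoef a n * x ^ n) := by
  set r := (x + 1) / 2 with hr
  have hr1 : r < 1 := by rw [hr]; linarith
  have hxr : x < r := by rw [hr]; linarith
  apply summable_of_ratio_norm_eventually_le hr1
  have htend : Tendsto (fun n : ℕ => (a + n) / (n + 1) * x) atTop (𝓝 x) := by
    have h1 : Tendsto (fun n : ℕ => (a + n) / (n + 1)) atTop (𝓝 1) := by
      have : (fun n : ℕ => (a + n) / (n + 1)) =
          fun n : ℕ => (a - 1) / (n + 1) + 1 := by
        funext n
        have hn : ((n : ℝ) + 1) ≠ 0 := by positivity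
        field_simp
        ring
      rw [this]
      have h2 : Tendsto (fun n : ℕ => (a - 1) / ((n:ℝ) + 1)) atTop (𝓝 0) := by
        apply Tendsto.div_atTop (tendsto_const_nhds)
        exact tendsto_atTop_add_const_right atTop 1 tendsto_natCast_atTop_atTop
      simpa using h2.add tendsto_const_nhds
    simpa using h1.mul_const x
  have hev : ∀ᶠ n : ℕ in atTop, (a + n) / (n + 1) * x ≤ r :=
    htend.eventually_le_const hxr
  filter_upwards [hev] with n hn
  have h1 : gcoef a (n+1) * x ^ (n+1) = (gcoef a n * x ^ n) * ((a + n)/(n+1) * x) := by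
    rw [gcoef_succ, pow_succ]; ring
  rw [Real.norm_eq_abs, Real.norm_eq_abs, h1, abs_mul]
  have hnn : (0:ℝ) ≤ (a + n)/(n+1) * x := by positivity
  rw [abs_of_nonneg hnn]
  calc |gcoef a n * x ^ n| * ((a + n)/(n+1) * x) ≤ |gcoef a n * x ^ n| * r :=
        mul_le_mul_of_nonneg_left hn (abs_nonneg _)
    _ = r * |gcoef a n * x ^ n| := mul_comm _ _
lemma desc_smeval_neg (r : ℝ) (k : ℕ) :
    (descPochhammer ℤ k).smeval (-r) = (-1:ℝ)^k * (ascPochhammer ℝ k).eval r := by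
  have h := Polynomial.ascPochhammer_smeval_neg_eq_descPochhammer (-r) k
  rw [neg_neg] at h
  have h2 : (ascPochhammer ℕ k).smeval r = (ascPochhammer ℝ k).eval r :=
    Polynomial.ascPochhammer_smeval_eq_eval r k
  rw [h2] at h
  have : ((-1:ℝ)^k) * ((-1:ℝ)^k) = 1 := by
    rw [← pow_add]; simp [pow_mul']
  calc (descPochhammer ℤ k).smeval (-r)
      = ((-1:ℝ)^k * (-1:ℝ)^k) * (descPochhammer ℤ k).smeval (-r) := by rw [this, one_mul]
    _ = (-1:ℝ)^k * ((-1:ℝ)^k * (descPochhammer ℤ k).smeval (-r)) := by ring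
    _ = (-1:ℝ)^k * (ascPochhammer ℝ k).eval r := by
        rw [h, Units.smul_def, zsmul_eq_mul, Int.cast_negOnePow_natCast]

lemma asc_eval_add (a b : ℝ) (n : ℕ) :
    (ascPochhammer ℝ n).eval (a + b) = ∑ ij ∈ antidiagonal n,
      (Nat.choose n ij.1 : ℝ) * ((ascPochhammer ℝ ij.1).eval a * (ascPochhammer ℝ ij.2).eval b) := by
  have h1 : (ascPochhammer ℝ n).eval (a + b)
      = (-1:ℝ)^n * (descPochhammer ℤ n).smeval (-(a+b)) := by
    rw [desc_smeval_neg (a+b) n, ← mul_assoc]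
    rw [← pow_add]
    simp [pow_mul']
  rw [h1, neg_add]
  rw [Ring.descPochhammer_smeval_add n (Commute.all _ _)]
  rw [Finset.mul_sum]
  refine Finset.sum_congr rfl ?_
  intro ij hij
  rw [desc_smeval_neg a ij.1, desc_smeval_neg b ij.2]
  have hn : ij.1 + ij.2 = n := HasAntidiagonal.mem_antidiagonal.mp hij
  have hsign : (-1:ℝ)^n * ((-1:ℝ)^ij.1 * (-1:ℝ)^ij.2) = 1 := by
    rw [← pow_add, hn, ← pow_add]
    simp [pow_mul']
  calc (-1:ℝ)^n * ((Nat.choose n ij.1 : ℝ) *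
        ((-1:ℝ)^ij.1 * (ascPochhammer ℝ ij.1).eval a * ((-1:ℝ)^ij.2 * (ascPochhammer ℝ ij.2).eval b)))
      = ((-1:ℝ)^n * ((-1:ℝ)^ij.1 * (-1:ℝ)^ij.2)) * ((Nat.choose n ij.1 : ℝ) *
        ((ascPochhammer ℝ ij.1).eval a * (ascPochhammer ℝ ij.2).eval b)) := by ring
    _ = _ := by rw [hsign, one_mul]

lemma gcoef_add_eq (a b : ℝ) (n : ℕ) :
    gcoef (a + b) n = ∑ ij ∈ antidiagonal n, gcoef a ij.1 * gcoef b ij.2 := by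
  unfold gcoef
  rw [asc_eval_add, Finset.sum_div]
  refine Finset.sum_congr rfl ?_
  intro ij hij
  have hn : ij.1 + ij.2 = n := HasAntidiagonal.mem_antidiagonal.mp hij
  have hfact : (Nat.choose n ij.1 : ℝ) * (Nat.factorial ij.1 : ℝ) * (Nat.factorial ij.2 : ℝ)
      = (Nat.factorial n : ℝ) := by
    have := Nat.add_choose_mul_factorial_mul_factorial ij.2 ij.1
    rw [Nat.add_comm ij.2 ij.1, hn] at this
    calc (Nat.choose n ij.1 : ℝ) * (Nat.factorial ij.1 : ℝ) * (Nat.factorial ij.2 : ℝ)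
        = ((Nat.choose n ij.1 * Nat.factorial ij.2 * Nat.factorial ij.1 : ℕ) : ℝ) := by
          push_cast; ring
      _ = (Nat.factorial n : ℝ) := by rw [this]
  have h1 : (Nat.factorial ij.1 : ℝ) ≠ 0 := Nat.cast_ne_zero.mpr (Nat.factorial_ne_zero _)
  have h2 : (Nat.factorial ij.2 : ℝ) ≠ 0 := Nat.cast_ne_zero.mpr (Nat.factorial_ne_zero _)
  have h3 : (Nat.factorial n : ℝ) ≠ 0 := Nat.cast_ne_zero.mpr (Nat.factorial_ne_zero _)
  field_simp
  rw [← hfact]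
  ring
lemma tsum_gcoef_mul {a b x : ℝ} (ha : 0 ≤ a) (hb : 0 ≤ b) (hx0 : 0 ≤ x) (hx1 : x < 1) :
    (∑' n, gcoef (a + b) n * x ^ n)
      = (∑' n, gcoef a n * x ^ n) * (∑' n, gcoef b n * x ^ n) := by
  have hsa := summable_gcoef_mul_pow ha hx0 hx1
  have hsb := summable_gcoef_mul_pow hb hx0 hx1
  have hna : Summable fun n => ‖gcoef a n * x ^ n‖ := by
    refine hsa.congr fun n => ?_
    rw [Real.norm_eq_abs, abs_of_nonneg
      (mul_nonneg (gcoef_nonneg ha n) (pow_nonneg hx0 n))]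
  have hnb : Summable fun n => ‖gcoef b n * x ^ n‖ := by
    refine hsb.congr fun n => ?_
    rw [Real.norm_eq_abs, abs_of_nonneg
      (mul_nonneg (gcoef_nonneg hb n) (pow_nonneg hx0 n))]
  rw [tsum_mul_tsum_eq_tsum_sum_antidiagonal_of_summable_norm hna hnb]
  refine tsum_congr fun n => ?_
  rw [gcoef_add_eq, Finset.sum_mul]
  refine Finset.sum_congr rfl fun ij hij => ?_
  have hn : ij.1 + ij.2 = n := HasAntidiagonal.mem_antidiagonal.mp hij
  rw [← hn, pow_add]
  ring

lemma hasSum_gcoef_half {x : ℝ} (hx0 : 0 ≤ x) (hx1 : x < 1) :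
    HasSum (fun n => gcoef (1/2 : ℝ) n * x ^ n) ((1 - x) ^ (-(1/2) : ℝ)) := by
  have h2 : (0:ℝ) ≤ 1/2 := by norm_num
  have hs := summable_gcoef_mul_pow h2 hx0 hx1
  set L := ∑' n, gcoef (1/2 : ℝ) n * x ^ n with hL
  have hgeom : (∑' n, gcoef (1:ℝ) n * x ^ n) = (1 - x)⁻¹ := by
    have : (fun n => gcoef (1:ℝ) n * x ^ n) = fun n => x ^ n := by
      funext n; rw [gcoef_one, one_mul]
    rw [this, tsum_geometric_of_lt_one hx0 hx1]
  have hLL : L * L = (1 - x)⁻¹ := by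
    rw [hL, ← tsum_gcoef_mul h2 h2 hx0 hx1]
    rw [show (1/2 : ℝ) + 1/2 = 1 by norm_num, hgeom]
  have hLpos : 0 < L := by
    have h1 : (1:ℝ) ≤ L := by
      show (1:ℝ) ≤ ∑' n, gcoef (1/2 : ℝ) n * x ^ n
      have := hs.le_tsum 0 (fun i _ =>
        mul_nonneg (gcoef_nonneg h2 i) (pow_nonneg hx0 i))
      simpa [gcoef_zero] using this
    linarith
  set y := (1 - x) ^ (-(1/2) : ℝ) with hy
  have hx1' : (0:ℝ) < 1 - x := by linarith
  have hypos : 0 < y := Real.rpow_pos_of_pos hx1' _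
  have hyy : y * y = (1 - x)⁻¹ := by
    rw [hy, ← Real.rpow_add hx1']
    norm_num [Real.rpow_neg_one]
  have hLy : L = y := by
    have h := hLL.trans hyy.symm
    rcases mul_self_eq_mul_self_iff.mp h with h' | h'
    · exact h'
    · exfalso; rw [h'] at hLpos; linarith
  rw [← hLy]
  exact hs.hasSum

lemma hasSum_gcoef_nat (d : ℕ) (hd : 1 ≤ d) {x : ℝ} (hx0 : 0 ≤ x) (hx1 : x < 1) :
    HasSum (fun n => gcoef ((d:ℝ)/2) n * x ^ n) ((1 - x) ^ (-((d:ℝ)/2))) := by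
  have hx1' : (0:ℝ) < 1 - x := by linarith
  induction d, hd using Nat.le_induction with
  | base => simpa using hasSum_gcoef_half hx0 hx1
  | succ d hd ih =>
    have hd0 : (0:ℝ) ≤ (d:ℝ)/2 := by positivity
    have h2 : (0:ℝ) ≤ 1/2 := by norm_num
    have hsum : Summable (fun n => gcoef (((d:ℕ)+1:ℝ)/2) n * x ^ n) := by
      have : (0:ℝ) ≤ ((d:ℝ)+1)/2 := by positivity
      exact summable_gcoef_mul_pow this hx0 hx1
    have heq : (((d:ℕ):ℝ)+1)/2 = (d:ℝ)/2 + 1/2 := by ring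
    have ht : (∑' n, gcoef (((d:ℝ)+1)/2) n * x ^ n)
        = (1 - x) ^ (-(((d:ℝ)+1)/2)) := by
      rw [heq, tsum_gcoef_mul hd0 h2 hx0 hx1, ih.tsum_eq,
        (hasSum_gcoef_half hx0 hx1).tsum_eq, ← Real.rpow_add hx1']
      norm_num
      ring_nf
    have : HasSum (fun n => gcoef (((d:ℝ)+1)/2) n * x ^ n)
        ((1 - x) ^ (-(((d:ℝ)+1)/2))) := by
      rw [← ht]
      exact (by exact_mod_cast hsum : Summable fun n => gcoef (((d:ℝ)+1)/2) n * x ^ n).hasSum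
    convert this using 2 <;> push_cast <;> ring
lemma aux_ae_Ioc :
    ∀ᵐ t ∂(volume.restrict (Set.uIoc (0:ℝ) 1)), t ∈ Set.Ioo (0:ℝ) 1 := by
  have h1 : Set.uIoc (0:ℝ) 1 = Set.Ioc 0 1 := Set.uIoc_of_le zero_le_one
  rw [h1, ← Measure.restrict_congr_set Ioo_ae_eq_Ioc]
  exact ae_restrict_mem measurableSet_Ioo

lemma intervalIntegrable_beta {p q : ℝ} (hp : -1 < p) (hq : -1 < q) :
    IntervalIntegrable (fun t : ℝ => t ^ p * (1 - t) ^ q) volume 0 1 := by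
  have h := Complex.betaIntegral_convergent (u := (p:ℂ)+1) (v := (q:ℂ)+1)
    (by simp; linarith) (by simp; linarith)
  simp only [add_sub_cancel_right] at h
  have h' := h.norm
  refine h'.congr_ae ?_
  filter_upwards [aux_ae_Ioc] with t ht
  have ht0 : (0:ℝ) < t := ht.1
  have ht1 : (0:ℝ) < 1 - t := by linarith [ht.2]
  have e1 : ‖(t:ℂ) ^ (p:ℂ)‖ = t ^ p := by
    rw [Complex.norm_cpow_eq_rpow_re_of_pos ht0]
    simp
  have e2 : ‖(1 - (t:ℂ)) ^ (q:ℂ)‖ = (1 - t) ^ q := by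
    have : (1 - (t:ℂ)) = ((1 - t : ℝ) : ℂ) := by push_cast; ring
    rw [this, Complex.norm_cpow_eq_rpow_re_of_pos ht1]
    simp
  simp only [norm_mul, e1, e2]

lemma integral_beta (p q : ℝ) (hp : 0 < p) (hq : 0 < q) :
    ∫ t in (0:ℝ)..1, t ^ (p-1) * (1-t) ^ (q-1)
      = Real.Gamma p * Real.Gamma q / Real.Gamma (p+q) := by
  have hc := Complex.Gamma_mul_Gamma_eq_betaIntegral (s := (p:ℂ)) (t := (q:ℂ))
    (by simpa using hp) (by simpa using hq)
  unfold Complex.betaIntegral at hc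
  have key : (∫ t in (0:ℝ)..1, (t:ℂ) ^ ((p:ℂ)-1) * (1-(t:ℂ)) ^ ((q:ℂ)-1))
      = ((∫ t in (0:ℝ)..1, t ^ (p-1) * (1-t) ^ (q-1) : ℝ) : ℂ) := by
    rw [← intervalIntegral.integral_ofReal]
    apply intervalIntegral.integral_congr_ae
    apply Filter.Eventually.of_forall
    intro t htm
    rw [Set.uIoc_of_le zero_le_one] at htm
    have ht0 : (0:ℝ) ≤ t := le_of_lt htm.1
    have ht1 : (0:ℝ) ≤ 1 - t := by linarith [htm.2]
    rw [Complex.ofReal_mul, Complex.ofReal_cpow ht0, Complex.ofReal_cpow ht1]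
    push_cast
    ring
  rw [key] at hc
  have h1 : ((p:ℂ)+(q:ℂ)) = ((p+q:ℝ):ℂ) := by push_cast; ring
  rw [h1, Complex.Gamma_ofReal, Complex.Gamma_ofReal, Complex.Gamma_ofReal,
    ← Complex.ofReal_mul, ← Complex.ofReal_mul] at hc
  have hr : Real.Gamma p * Real.Gamma q
      = Real.Gamma (p+q) * ∫ t in (0:ℝ)..1, t ^ (p-1) * (1-t) ^ (q-1) :=
    Complex.ofReal_inj.mp hc
  have hne : Real.Gamma (p+q) ≠ 0 := (Real.Gamma_pos_of_pos (by linarith)).ne'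
  field_simp
  linarith [hr]
theorem c_nonneg_sum_one (ν μ : ℝ) (hν : 0 < ν) (hμ : 0 < μ) (d : ℕ) (hd : 1 ≤ d)
    (c : ℕ → ℝ)
    (hc : ∀ n : ℕ, c n =
      (Real.Gamma (ν + μ) / (Real.Gamma ν * Real.Gamma μ)) *
        ((ascPochhammer ℝ n).eval ((d : ℝ) / 2) / (Nat.factorial n : ℝ)) *
        ∫ t in (0 : ℝ)..1,
          t ^ (μ + (d : ℝ) / 2 - 1) * (1 - t) ^ (ν + (d : ℝ) / 2 - 1) * (1 - t + t ^ 2) ^ n) :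
    (∀ n, 0 ≤ c n) ∧ HasSum c 1 := by
  set a : ℝ := (d : ℝ) / 2 with ha_def
  have ha : 0 < a := by
    have : (0:ℝ) < (d:ℝ) := by exact_mod_cast hd
    positivity
  set p : ℝ := μ + a - 1 with hp_def
  set q : ℝ := ν + a - 1 with hq_def
  have hp : -1 < p := by rw [hp_def]; linarith
  have hq : -1 < q := by rw [hq_def]; linarith
  set K : ℝ := Real.Gamma (ν + μ) / (Real.Gamma ν * Real.Gamma μ) with hK_def
  have hKpos : 0 < K := by
    rw [hK_def]
    have h1 := Real.Gamma_pos_of_pos (by linarith : (0:ℝ) < ν + μ)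
    have h2 := Real.Gamma_pos_of_pos hν
    have h3 := Real.Gamma_pos_of_pos hμ
    positivity
  set f : ℕ → ℝ → ℝ := fun n t => t ^ p * (1 - t) ^ q * (1 - t + t ^ 2) ^ n with hf_def
  set I : ℕ → ℝ := fun n => ∫ t in (0:ℝ)..1, f n t with hI_def
  -- integrability of each f n
  have hfint : ∀ n, IntervalIntegrable (f n) volume 0 1 := by
    intro n
    have hcont : ContinuousOn (fun t : ℝ => (1 - t + t ^ 2) ^ n) (Set.uIcc 0 1) :=
      (Continuous.pow (by continuity) n).continuousOn
    exact (intervalIntegrable_beta hp hq).mul_continuousOn hcont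
  -- nonnegativity of each f n on [0,1]
  have hfnonneg : ∀ n, ∀ t ∈ Set.Icc (0:ℝ) 1, 0 ≤ f n t := by
    intro n t ht
    have h1 : (0:ℝ) ≤ t := ht.1
    have h2 : (0:ℝ) ≤ 1 - t := by linarith [ht.2]
    have h3 : (0:ℝ) ≤ 1 - t + t ^ 2 := by nlinarith
    exact mul_nonneg (mul_nonneg (Real.rpow_nonneg h1 _) (Real.rpow_nonneg h2 _))
      (pow_nonneg h3 n)
  have hInonneg : ∀ n, 0 ≤ I n := fun n =>
    intervalIntegral.integral_nonneg zero_le_one (hfnonneg n)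
  have hgnonneg : ∀ n, 0 ≤ gcoef a n := gcoef_nonneg ha.le
  have hceq : ∀ n, c n = K * (gcoef a n * I n) := by
    intro n
    rw [hc n]
    rw [mul_assoc]
    rfl
  constructor
  · intro n
    rw [hceq n]
    exact mul_nonneg hKpos.le (mul_nonneg (hgnonneg n) (hInonneg n))
  -- the sum
  set J : ℝ := ∫ t in (0:ℝ)..1, t ^ (μ - 1) * (1 - t) ^ (ν - 1) with hJ_def
  have hJval : J = Real.Gamma μ * Real.Gamma ν / Real.Gamma (μ + ν) :=
    integral_beta μ ν hμ hν
  -- main hasSum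
  have hmain : HasSum (fun n => gcoef a n * I n) J := by
    rw [hasSum_iff_tendsto_nat_of_nonneg
      (fun n => mul_nonneg (hgnonneg n) (hInonneg n)) J]
    -- express partial sums as integrals over Ioc 0 1
    have hIset : ∀ n, I n = ∫ t in Set.Ioc (0:ℝ) 1, f n t := fun n =>
      intervalIntegral.integral_of_le zero_le_one
    have hint' : ∀ n, IntegrableOn (f n) (Set.Ioc (0:ℝ) 1) volume := by
      intro n
      have := (hfint n)
      rw [intervalIntegrable_iff, Set.uIoc_of_le zero_le_one] at this
      exact this
    have hpartial : ∀ N : ℕ, (∑ n ∈ Finset.range N, gcoef a n * I n)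
        = ∫ t in Set.Ioc (0:ℝ) 1, (∑ n ∈ Finset.range N, gcoef a n * f n t) := by
      intro N
      rw [MeasureTheory.integral_finset_sum _
        (fun n _ => ((hint' n).const_mul (gcoef a n)))]
      refine Finset.sum_congr rfl fun n _ => ?_
      rw [hIset n, MeasureTheory.integral_const_mul]
    have hGint : IntegrableOn (fun t : ℝ => t ^ (μ - 1) * (1 - t) ^ (ν - 1))
        (Set.Ioc (0:ℝ) 1) volume := by
      have := intervalIntegrable_beta (p := μ - 1) (q := ν - 1)
        (by linarith) (by linarith)
      rw [intervalIntegrable_iff, Set.uIoc_of_le zero_le_one] at this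
      exact this
    have hJset : J = ∫ t in Set.Ioc (0:ℝ) 1, t ^ (μ - 1) * (1 - t) ^ (ν - 1) :=
      intervalIntegral.integral_of_le zero_le_one
    simp only [hpartial, hJset]
    -- monotone convergence
    have haux : ∀ᵐ t ∂(volume.restrict (Set.Ioc (0:ℝ) 1)), t ∈ Set.Ioo (0:ℝ) 1 := by
      rw [← Measure.restrict_congr_set Ioo_ae_eq_Ioc]
      exact ae_restrict_mem measurableSet_Ioo
    apply MeasureTheory.integral_tendsto_of_tendsto_of_monotone
    · intro N
      exact integrable_finset_sum _ (fun n _ => ((hint' n).const_mul (gcoef a n)))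
    · exact hGint
    · filter_upwards [haux] with t ht
      intro M N hMN
      apply Finset.sum_le_sum_of_subset_of_nonneg
        (Finset.range_subset_range.mpr hMN)
      intro n _ _
      exact mul_nonneg (hgnonneg n) (hfnonneg n t (Set.mem_Icc_of_Ioo ht))
    · filter_upwards [haux] with t ht
      have ht0 : (0:ℝ) < t := ht.1
      have ht1 : (0:ℝ) < 1 - t := by linarith [ht.2]
      set x : ℝ := 1 - t + t ^ 2 with hx_def
      have hx0 : (0:ℝ) ≤ x := by nlinarith
      have hx1 : x < 1 := by nlinarith
      have hbs := hasSum_gcoef_nat d hd hx0 hx1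
      have hbs2 := hbs.mul_left (t ^ p * (1 - t) ^ q)
      have hval : t ^ p * (1 - t) ^ q * (1 - x) ^ (-a)
          = t ^ (μ - 1) * (1 - t) ^ (ν - 1) := by
        have h1x : 1 - x = t * (1 - t) := by rw [hx_def]; ring
        rw [h1x, Real.mul_rpow ht0.le ht1.le]
        rw [show t ^ p * (1 - t) ^ q * (t ^ (-a) * (1 - t) ^ (-a))
          = (t ^ p * t ^ (-a)) * ((1 - t) ^ q * (1 - t) ^ (-a)) by ring]
        rw [← Real.rpow_add ht0, ← Real.rpow_add ht1]
        congr 1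
        · congr 1; rw [hp_def]; ring
        · congr 1; rw [hq_def]; ring
      rw [hval] at hbs2
      have := hbs2.tendsto_sum_nat
      convert this using 2 with N
      refine Finset.sum_congr rfl fun n _ => ?_
      rw [hf_def]
      ring
  -- conclude
  have hcsum : HasSum c (K * J) := by
    have := hmain.mul_left K
    refine HasSum.congr_fun this fun n => hceq n
  have hKJ : K * J = 1 := by
    rw [hK_def, hJval]
    have h1 := (Real.Gamma_pos_of_pos hν).ne'
    have h2 := (Real.Gamma_pos_of_pos hμ).ne'
    have h3 := (Real.Gamma_pos_of_pos (by linarith : (0:ℝ) < μ + ν)).ne'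
    rw [show ν + μ = μ + ν by ring]
    field_simp
  rwa [hKJ] at hcsum
end

section
/- Let μ, ν > 0, d ≥ 1, n ≥ 0, and define d_{k,l} = (B(ν+d/2, μ+d/2)/(B(ν,μ) k! l!)) · (μ+d/2)_{2k} (ν+d/2)_l (d/2)_{k+l} / (μ+ν+d)_{2k+l}. Then ∑_{k=0}^n d_{k,n-k} = (1/B(ν,μ)) ((d/2)_n/n!) ∫_0^1 t^{μ+n+d/2-1}(1-t)^{ν+n+d/2-1} (1 + t/(1-t) + (1-t)/t)^n dt. -/
open Real MeasureTheory

lemma gamma_asc (x : ℝ) (hx : 0 < x) (m : ℕ) :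
    Real.Gamma (x + m) = Real.Gamma x * (ascPochhammer ℝ m).eval x := by
  induction m with
  | zero => simp
  | succ m ih =>
      rw [ascPochhammer_succ_right]
      push_cast
      rw [show x + (m + 1 : ℝ) = (x + m) + 1 by ring, Real.Gamma_add_one (by positivity), ih]
      simp [Polynomial.eval_mul]
      ring

lemma beta_left {u : ℝ} (hu : 0 < u) (v : ℝ) :
    IntervalIntegrable (fun x : ℝ => x ^ (u - 1) * (1 - x) ^ (v - 1)) volume 0 (1 / 2) := by
  apply IntervalIntegrable.mul_continuousOn
  · exact intervalIntegral.intervalIntegrable_rpow' (by linarith)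
  · apply continuousOn_of_forall_continuousAt
    intro x hx
    rw [Set.uIcc_of_le (by norm_num : (0:ℝ) ≤ 1/2)] at hx
    exact ((continuous_const.sub continuous_id).continuousAt).rpow_const
      (Or.inl (by show (1:ℝ) - x ≠ 0; intro h; nlinarith [hx.2]))

lemma beta_conv {u v : ℝ} (hu : 0 < u) (hv : 0 < v) :
    IntervalIntegrable (fun x : ℝ => x ^ (u - 1) * (1 - x) ^ (v - 1)) volume 0 1 := by
  refine (beta_left hu v).trans ?_
  rw [IntervalIntegrable.iff_comp_neg]
  convert ((beta_left hv u).comp_add_right 1).symm using 1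
  · ext1 x
    conv_lhs => rw [mul_comm]
    congr 2 <;> ring
  · norm_num
  · norm_num

lemma beta_eval {u v : ℝ} (hu : 0 < u) (hv : 0 < v) :
    ∫ x in (0:ℝ)..1, x ^ (u - 1) * (1 - x) ^ (v - 1) =
      Real.Gamma u * Real.Gamma v / Real.Gamma (u + v) := by
  have h := Complex.Gamma_mul_Gamma_eq_betaIntegral (s := (u:ℂ)) (t := (v:ℂ))
    (by simpa using hu) (by simpa using hv)
  have hB : Complex.betaIntegral u v =
      ((∫ x in (0:ℝ)..1, x ^ (u - 1) * (1 - x) ^ (v - 1) : ℝ) : ℂ) := by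
    rw [Complex.betaIntegral, ← intervalIntegral.integral_ofReal]
    refine intervalIntegral.integral_congr fun x hx => ?_
    rw [Set.uIcc_of_le (by norm_num : (0:ℝ) ≤ 1)] at hx
    rw [Complex.ofReal_mul, Complex.ofReal_cpow hx.1,
      Complex.ofReal_cpow (by linarith [hx.2] : (0:ℝ) ≤ 1 - x)]
    push_cast
    ring
  rw [hB] at h
  have hG : Real.Gamma (u + v) ≠ 0 := (Real.Gamma_pos_of_pos (by linarith)).ne'
  have := congrArg Complex.re h
  simp only [Complex.Gamma_ofReal, ← Complex.ofReal_add, ← Complex.ofReal_mul,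
    Complex.ofReal_re] at this
  field_simp
  linarith [this]

theorem sum_dkl_eq_cn (ν μ : ℝ) (hν : 0 < ν) (hμ : 0 < μ) (d : ℕ) (hd : 1 ≤ d) (n : ℕ)
    (D : ℕ → ℕ → ℝ)
    (hD : ∀ k l : ℕ, D k l =
      ((Real.Gamma (ν + (d : ℝ) / 2) * Real.Gamma (μ + (d : ℝ) / 2) /
          Real.Gamma (ν + μ + (d : ℝ))) /
        ((Real.Gamma ν * Real.Gamma μ / Real.Gamma (ν + μ)) *
          (Nat.factorial k : ℝ) * (Nat.factorial l : ℝ))) *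
      ((ascPochhammer ℝ (2 * k)).eval (μ + (d : ℝ) / 2) *
        (ascPochhammer ℝ l).eval (ν + (d : ℝ) / 2) *
        (ascPochhammer ℝ (k + l)).eval ((d : ℝ) / 2) /
        (ascPochhammer ℝ (2 * k + l)).eval (μ + ν + (d : ℝ)))) :
    ∑ k ∈ Finset.range (n + 1), D k (n - k) =
      (Real.Gamma (ν + μ) / (Real.Gamma ν * Real.Gamma μ)) *
        ((ascPochhammer ℝ n).eval ((d : ℝ) / 2) / (Nat.factorial n : ℝ)) *
        ∫ t in (0 : ℝ)..1,
          t ^ (μ + (n : ℝ) + (d : ℝ) / 2 - 1) * (1 - t) ^ (ν + (n : ℝ) + (d : ℝ) / 2 - 1) *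
            (1 + t / (1 - t) + (1 - t) / t) ^ n := by
  have hdpos : (0:ℝ) < (d : ℝ) / 2 := by
    have : (1:ℝ) ≤ (d:ℝ) := by exact_mod_cast hd
    linarith
  set s : ℝ := (d : ℝ) / 2 with hs
  set A : ℕ → ℝ := fun k => μ + s + ((2 * k : ℕ) : ℝ) with hA
  set B : ℕ → ℝ := fun k => ν + s + ((n - k : ℕ) : ℝ) with hB
  have hApos : ∀ k, 0 < A k := fun k => by positivity
  have hBpos : ∀ k, 0 < B k := fun k => by positivity
  -- Step 1: rewrite the integral as a sum of Beta integrals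
  have hint : (∫ t in (0 : ℝ)..1,
        t ^ (μ + (n : ℝ) + s - 1) * (1 - t) ^ (ν + (n : ℝ) + s - 1) *
          (1 + t / (1 - t) + (1 - t) / t) ^ n) =
      ∑ k ∈ Finset.range (n + 1), (n.choose k : ℝ) *
        ∫ t in (0 : ℝ)..1, t ^ (A k - 1) * (1 - t) ^ (B k - 1) := by
    have key : ∀ t ∈ Set.Ioo (0:ℝ) 1,
        t ^ (μ + (n : ℝ) + s - 1) * (1 - t) ^ (ν + (n : ℝ) + s - 1) *
          (1 + t / (1 - t) + (1 - t) / t) ^ n =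
        ∑ k ∈ Finset.range (n + 1),
          (n.choose k : ℝ) * (t ^ (A k - 1) * (1 - t) ^ (B k - 1)) := by
      intro t ht
      obtain ⟨ht0, ht1⟩ := ht
      have h1t : (0:ℝ) < 1 - t := by linarith
      have htri : 1 + t / (1 - t) + (1 - t) / t = (t ^ 2 + (1 - t)) / (t * (1 - t)) := by
        field_simp; ring
      rw [htri, div_pow, add_pow, Finset.sum_div, Finset.mul_sum]
      refine Finset.sum_congr rfl fun k hk => ?_
      have hk' : k ≤ n := Nat.lt_succ_iff.mp (Finset.mem_range.mp hk)
      have et : t ^ (A k - 1) =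
          t ^ (μ + (n : ℝ) + s - 1) * t ^ ((2 * k : ℕ) : ℝ) / t ^ ((n : ℕ) : ℝ) := by
        rw [← Real.rpow_add ht0, ← Real.rpow_sub ht0]
        congr 1; simp [hA]; ring
      have e1t : (1 - t) ^ (B k - 1) =
          (1 - t) ^ (ν + (n : ℝ) + s - 1) * (1 - t) ^ ((n - k : ℕ) : ℝ) /
            (1 - t) ^ ((n : ℕ) : ℝ) := by
        rw [← Real.rpow_add h1t, ← Real.rpow_sub h1t]
        congr 1; simp [hB]; ring
      rw [et, e1t, ← pow_mul, mul_pow,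
        ← Real.rpow_natCast t (2 * k), ← Real.rpow_natCast (1 - t) (n - k),
        ← Real.rpow_natCast t n, ← Real.rpow_natCast (1 - t) n]
      field_simp
    have h1 : (∫ t in (0 : ℝ)..1,
        t ^ (μ + (n : ℝ) + s - 1) * (1 - t) ^ (ν + (n : ℝ) + s - 1) *
          (1 + t / (1 - t) + (1 - t) / t) ^ n) =
        ∫ t in (0 : ℝ)..1, ∑ k ∈ Finset.range (n + 1),
          (n.choose k : ℝ) * (t ^ (A k - 1) * (1 - t) ^ (B k - 1)) := by
      rw [intervalIntegral.integral_of_le zero_le_one,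
        intervalIntegral.integral_of_le zero_le_one,
        MeasureTheory.integral_Ioc_eq_integral_Ioo,
        MeasureTheory.integral_Ioc_eq_integral_Ioo]
      exact MeasureTheory.setIntegral_congr_fun measurableSet_Ioo key
    rw [h1, intervalIntegral.integral_finset_sum]
    · exact Finset.sum_congr rfl fun k _ => by
        rw [intervalIntegral.integral_const_mul]
    · exact fun k _ => (beta_conv (hApos k) (hBpos k)).const_mul _
  rw [hint, Finset.mul_sum]
  refine Finset.sum_congr rfl fun k hk => ?_
  have hk' : k ≤ n := Nat.lt_succ_iff.mp (Finset.mem_range.mp hk)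
  rw [hD, beta_eval (hApos k) (hBpos k)]
  -- Gamma / Pochhammer relations
  have hGA : Real.Gamma (A k) =
      Real.Gamma (μ + s) * (ascPochhammer ℝ (2 * k)).eval (μ + s) :=
    gamma_asc (μ + s) (by positivity) (2 * k)
  have hGB : Real.Gamma (B k) =
      Real.Gamma (ν + s) * (ascPochhammer ℝ (n - k)).eval (ν + s) :=
    gamma_asc (ν + s) (by positivity) (n - k)
  have hsum : A k + B k = (μ + ν + (d : ℝ)) + ((2 * k + (n - k) : ℕ) : ℝ) := by
    simp only [hA, hB, hs]
    push_cast [Nat.cast_sub hk']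
    ring
  have hGAB : Real.Gamma (A k + B k) =
      Real.Gamma (μ + ν + (d : ℝ)) *
        (ascPochhammer ℝ (2 * k + (n - k))).eval (μ + ν + (d : ℝ)) := by
    rw [hsum]; exact gamma_asc _ (by positivity) _
  have hkn : k + (n - k) = n := Nat.add_sub_cancel' hk'
  have hnm : ν + μ + (d : ℝ) = μ + ν + (d : ℝ) := by ring
  rw [hGA, hGB, hGAB, hkn, hnm]
  -- nonzero facts
  have g1 : Real.Gamma ν ≠ 0 := (Real.Gamma_pos_of_pos hν).ne'
  have g2 : Real.Gamma μ ≠ 0 := (Real.Gamma_pos_of_pos hμ).ne'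
  have g3 : Real.Gamma (ν + μ) ≠ 0 := (Real.Gamma_pos_of_pos (by linarith)).ne'
  have g4 : Real.Gamma (μ + ν + (d : ℝ)) ≠ 0 :=
    (Real.Gamma_pos_of_pos (by positivity)).ne'
  have g5 : (ascPochhammer ℝ (2 * k + (n - k))).eval (μ + ν + (d : ℝ)) ≠ 0 := by
    intro h
    have := gamma_asc (μ + ν + (d : ℝ)) (by positivity) (2 * k + (n - k))
    rw [h, mul_zero] at this
    exact (Real.Gamma_pos_of_pos (by positivity : (0:ℝ) < μ + ν + (d:ℝ) +
      ((2 * k + (n - k) : ℕ) : ℝ))).ne' this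
  have f1 : (Nat.factorial k : ℝ) ≠ 0 := by positivity
  have f2 : (Nat.factorial (n - k) : ℝ) ≠ 0 := by positivity
  have f3 : (Nat.factorial n : ℝ) ≠ 0 := by positivity
  have hC : ((n.choose k : ℕ) : ℝ) * (Nat.factorial k : ℝ) * (Nat.factorial (n - k) : ℝ) =
      (Nat.factorial n : ℝ) := by
    exact_mod_cast congrArg (Nat.cast (R := ℝ)) (Nat.choose_mul_factorial_mul_factorial hk')
  rw [← hC]
  have hCne : ((n.choose k : ℕ) : ℝ) ≠ 0 := by
    exact_mod_cast Nat.cast_ne_zero.mpr (Nat.choose_pos hk').ne'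
  field_simp
end

section
/- Let ν > 0, σ > 0, γ = 1/(σ√2), and d ≥ 1. Then for all z ∈ ℝ^d, ∫_0^∞ (1/Γ(ν)) e^{-a} a^{ν-1} (2π(σ² + 1/(2a)))^{-d/2} exp(−‖z‖²/(2(σ² + 1/(2a)))) da = ∑_{k=0}^∞ α_k g_{k,σ}(z), where α_k = (Γ(k+d/2)/(k! Γ(d/2) Γ(ν))) γ^{2k} ∫_0^∞ e^{-a} a^{ν+d/2-1} (a+γ²)^{-k-d/2} da and g_{k,σ}(z) = (Γ(d/2)/(Γ(k+d/2)(σ√(2π))^d)) (‖z‖²/(2σ²))^k e^{−‖z‖²/(2σ²)}. -/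
open Real MeasureTheory

private lemma exp_eq_tsum' (t : ℝ) : Real.exp t = ∑' n : ℕ, t ^ n / n.factorial := by
  rw [Real.exp_eq_exp_ℝ, NormedSpace.exp_eq_tsum_div]

private lemma rpow_split (b : ℝ) (hb : 0 < b) (d : ℕ) (k : ℕ) :
    b ^ (-(k:ℝ) - (d:ℝ)/2) = (b ^ k)⁻¹ * b ^ (-(d:ℝ)/2) := by
  rw [show -(k:ℝ) - (d:ℝ)/2 = (-(k:ℝ)) + (-(d:ℝ)/2) by ring, Real.rpow_add hb,
    Real.rpow_neg hb.le (k:ℝ), Real.rpow_natCast]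

private lemma sqrt_pow_eq (σ : ℝ) (hσ : 0 < σ) (d : ℕ) :
    (2*π*σ^2 : ℝ) ^ ((d:ℝ)/2) = (σ * Real.sqrt (2*π))^d := by
  have h0 : (0:ℝ) ≤ 2*π*σ^2 := by positivity
  have h1 : σ * Real.sqrt (2*π) = Real.sqrt (2*π*σ^2) := by
    rw [show 2*π*σ^2 = σ^2 * (2*π) by ring, Real.sqrt_mul (sq_nonneg σ), Real.sqrt_sq hσ.le]
  rw [h1, Real.sqrt_eq_rpow, ← Real.rpow_natCast ((2*π*σ^2:ℝ) ^ ((1:ℝ)/2)) d,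
    ← Real.rpow_mul h0]
  congr 1; ring

theorem density_decomposition (ν σ : ℝ) (hν : 0 < ν) (hσ : 0 < σ) (γ : ℝ)
    (hγ : γ = 1 / (σ * Real.sqrt 2)) (d : ℕ) (hd : 1 ≤ d)
    (z : EuclideanSpace ℝ (Fin d)) :
    (∫ a in Set.Ioi (0 : ℝ),
        (1 / Real.Gamma ν) * Real.exp (-a) * a ^ (ν - 1) *
          (2 * π * (σ ^ 2 + 1 / (2 * a))) ^ (-(d : ℝ) / 2) *
          Real.exp (-(‖z‖ ^ 2) / (2 * (σ ^ 2 + 1 / (2 * a))))) =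
      ∑' k : ℕ,
        (Real.Gamma ((k : ℝ) + (d : ℝ) / 2) /
            ((Nat.factorial k : ℝ) * Real.Gamma ((d : ℝ) / 2) * Real.Gamma ν) *
          γ ^ (2 * k) *
          ∫ a in Set.Ioi (0 : ℝ),
            Real.exp (-a) * a ^ (ν + (d : ℝ) / 2 - 1) *
              (a + γ ^ 2) ^ (-(k : ℝ) - (d : ℝ) / 2)) *
        (Real.Gamma ((d : ℝ) / 2) /
            (Real.Gamma ((k : ℝ) + (d : ℝ) / 2) * (σ * Real.sqrt (2 * π)) ^ d) *
          (‖z‖ ^ 2 / (2 * σ ^ 2)) ^ k * Real.exp (-(‖z‖ ^ 2) / (2 * σ ^ 2))) := by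
  have hπ : (0:ℝ) < π := Real.pi_pos
  have hσ2 : (0:ℝ) < σ ^ 2 := by positivity
  have hγ2 : γ ^ 2 = 1 / (2 * σ ^ 2) := by
    rw [hγ, div_pow, mul_pow, Real.sq_sqrt (by norm_num : (0:ℝ) ≤ 2)]
    ring
  have hγpos : 0 < γ ^ 2 := by rw [hγ2]; positivity
  have hΓν : 0 < Real.Gamma ν := Real.Gamma_pos_of_pos hν
  have hd2 : (0:ℝ) < (d:ℝ)/2 := by
    have : (1:ℝ) ≤ (d:ℝ) := by exact_mod_cast hd
    linarith
  have hp : 0 < ν + (d:ℝ)/2 := by linarith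
  have hΓp : 0 < Real.Gamma (ν + (d:ℝ)/2) := Real.Gamma_pos_of_pos hp
  have hΓd : 0 < Real.Gamma ((d:ℝ)/2) := Real.Gamma_pos_of_pos hd2
  have hpow : (0:ℝ) < (σ * Real.sqrt (2*π)) ^ d := by positivity
  set x : ℝ := ‖z‖ ^ 2 with hxdef
  have hx0 : 0 ≤ x := sq_nonneg _
  set q : ℝ := x / (2 * σ ^ 2) with hqdef
  have hq0 : 0 ≤ q := by positivity
  set h : ℕ → ℝ → ℝ := fun k a =>
    Real.exp (-a) * a ^ (ν + (d:ℝ)/2 - 1) * (a + γ ^ 2) ^ (-(k:ℝ) - (d:ℝ)/2) with hhdef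
  set c : ℕ → ℝ := fun k =>
    Real.exp (-x / (2 * σ ^ 2)) / (Real.Gamma ν * (σ * Real.sqrt (2*π)) ^ d) *
      (q ^ k * (γ ^ 2) ^ k / (Nat.factorial k)) with hcdef
  have hc0 : ∀ k, 0 ≤ c k := by
    intro k
    simp only [hcdef]
    positivity
  have hh0 : ∀ k, ∀ a ∈ Set.Ioi (0:ℝ), 0 ≤ h k a := by
    intro k a ha
    have ha0 : (0:ℝ) < a := ha
    simp only [hhdef]
    positivity
  -- integrability
  have hb : IntegrableOn (fun a : ℝ => Real.exp (-a) * a ^ (ν + (d:ℝ)/2 - 1)) (Set.Ioi 0) :=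
    Real.GammaIntegral_convergent hp
  have hhle : ∀ (k : ℕ), ∀ a ∈ Set.Ioi (0:ℝ),
      h k a ≤ (γ ^ 2) ^ (-(k:ℝ) - (d:ℝ)/2) * (Real.exp (-a) * a ^ (ν + (d:ℝ)/2 - 1)) := by
    intro k a ha
    have ha0 : (0:ℝ) < a := ha
    have hle : (a + γ ^ 2) ^ (-(k:ℝ) - (d:ℝ)/2) ≤ (γ ^ 2) ^ (-(k:ℝ) - (d:ℝ)/2) := by
      apply Real.rpow_le_rpow_of_nonpos hγpos (by linarith)
      have : (0:ℝ) ≤ (k:ℝ) + (d:ℝ)/2 := by positivity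
      linarith
    calc h k a = (a + γ ^ 2) ^ (-(k:ℝ) - (d:ℝ)/2) * (Real.exp (-a) * a ^ (ν + (d:ℝ)/2 - 1)) := by
          simp only [hhdef]; ring
      _ ≤ _ := by
          apply mul_le_mul_of_nonneg_right hle
          positivity
  have hmeas : ∀ k : ℕ, Measurable (h k) := by
    intro k
    simp only [hhdef]
    fun_prop
  have hIk : ∀ k : ℕ, IntegrableOn (h k) (Set.Ioi 0) := by
    intro k
    apply Integrable.mono' (hb.const_mul ((γ ^ 2) ^ (-(k:ℝ) - (d:ℝ)/2)))
      (hmeas k).aestronglyMeasurable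
    filter_upwards [ae_restrict_mem measurableSet_Ioi] with a ha
    rw [Real.norm_of_nonneg (hh0 k a ha)]
    exact hhle k a ha
  have hIbound : ∀ k : ℕ, ∫ a in Set.Ioi (0:ℝ), h k a
      ≤ (γ ^ 2) ^ (-(k:ℝ) - (d:ℝ)/2) * Real.Gamma (ν + (d:ℝ)/2) := by
    intro k
    have h1 : ∫ a in Set.Ioi (0:ℝ), h k a ≤
        ∫ a in Set.Ioi (0:ℝ), (γ ^ 2) ^ (-(k:ℝ) - (d:ℝ)/2) *
          (Real.exp (-a) * a ^ (ν + (d:ℝ)/2 - 1)) :=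
      setIntegral_mono_on (hIk k) (hb.const_mul _) measurableSet_Ioi (hhle k)
    rwa [integral_const_mul, ← Real.Gamma_eq_integral hp] at h1
  -- the summand functions
  have hgint : ∀ k : ℕ, Integrable (fun a => c k * h k a) (volume.restrict (Set.Ioi 0)) :=
    fun k => (hIk k).const_mul (c k)
  have hgnorm : ∀ k : ℕ, ∫ a in Set.Ioi (0:ℝ), ‖c k * h k a‖
      ≤ c k * ((γ ^ 2) ^ (-(k:ℝ) - (d:ℝ)/2) * Real.Gamma (ν + (d:ℝ)/2)) := by
    intro k
    have heq : ∫ a in Set.Ioi (0:ℝ), ‖c k * h k a‖ = c k * ∫ a in Set.Ioi (0:ℝ), h k a := by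
      rw [← integral_const_mul]
      apply integral_congr_ae
      filter_upwards [ae_restrict_mem measurableSet_Ioi] with a ha
      rw [Real.norm_of_nonneg (mul_nonneg (hc0 k) (hh0 k a ha))]
    rw [heq]
    exact mul_le_mul_of_nonneg_left (hIbound k) (hc0 k)
  have hsum : Summable fun k : ℕ => ∫ a in Set.Ioi (0:ℝ), ‖c k * h k a‖ := by
    apply Summable.of_nonneg_of_le
      (fun k => integral_nonneg (fun a => norm_nonneg _))
      (fun k => le_trans (hgnorm k) (le_of_eq ?_))
      (((Real.summable_pow_div_factorial q).mul_left
        (Real.exp (-x / (2 * σ ^ 2)) / (Real.Gamma ν * (σ * Real.sqrt (2*π)) ^ d) *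
          ((γ ^ 2) ^ (-(d:ℝ)/2) * Real.Gamma (ν + (d:ℝ)/2)))))
    simp only [hcdef]
    rw [rpow_split _ hγpos]
    have hne : ((γ ^ 2 : ℝ) ^ k) ≠ 0 := by positivity
    field_simp
  -- pointwise identity on Ioi 0
  have key : ∀ a ∈ Set.Ioi (0:ℝ),
      (1 / Real.Gamma ν) * Real.exp (-a) * a ^ (ν - 1) *
        (2 * π * (σ ^ 2 + 1 / (2 * a))) ^ (-(d : ℝ) / 2) *
        Real.exp (-x / (2 * (σ ^ 2 + 1 / (2 * a))))
      = ∑' k : ℕ, c k * h k a := by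
    intro a ha
    have ha0 : (0:ℝ) < a := ha
    have haγ : (0:ℝ) < a + γ ^ 2 := by positivity
    have hsp : σ ^ 2 + 1 / (2 * a) = 2 * π * σ ^ 2 * ((a + γ ^ 2) / a) / (2 * π) := by
      rw [hγ2]; field_simp
    have hspos : (0:ℝ) < σ ^ 2 + 1 / (2 * a) := by positivity
    have hexp : -x / (2 * (σ ^ 2 + 1 / (2 * a)))
        = -x / (2 * σ ^ 2) + q * (γ ^ 2 / (a + γ ^ 2)) := by
      rw [hsp, hqdef, hγ2]; field_simp; ring
    have hr1 : (2 * π * (σ ^ 2 + 1 / (2 * a))) ^ (-(d : ℝ) / 2)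
        = ((σ * Real.sqrt (2 * π)) ^ d)⁻¹ *
          (a ^ ((d:ℝ)/2) * (a + γ ^ 2) ^ (-(d:ℝ)/2)) := by
      rw [hsp, show 2 * π * (2 * π * σ ^ 2 * ((a + γ ^ 2) / a) / (2 * π))
          = 2 * π * σ ^ 2 * ((a + γ ^ 2) / a) by field_simp,
        Real.mul_rpow (by positivity) (by positivity), neg_div,
        Real.rpow_neg (by positivity : (0:ℝ) ≤ 2 * π * σ ^ 2), sqrt_pow_eq σ hσ d]
      congr 1
      rw [Real.rpow_neg (by positivity : (0:ℝ) ≤ (a + γ ^ 2) / a),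
        Real.div_rpow haγ.le ha0.le, inv_div, div_eq_mul_inv,
        ← Real.rpow_neg haγ.le]
    rw [hexp, hr1, Real.exp_add, exp_eq_tsum' (q * (γ ^ 2 / (a + γ ^ 2)))]
    have perk : ∀ k : ℕ, (1 / Real.Gamma ν) * Real.exp (-a) * a ^ (ν - 1) *
        (((σ * Real.sqrt (2 * π)) ^ d)⁻¹ * (a ^ ((d:ℝ)/2) * (a + γ ^ 2) ^ (-(d:ℝ)/2))) *
        Real.exp (-x / (2 * σ ^ 2)) * ((q * (γ ^ 2 / (a + γ ^ 2))) ^ k / (Nat.factorial k))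
        = c k * h k a := by
      intro k
      have hsplit := rpow_split (a + γ ^ 2) haγ d k
      have hapow : a ^ (ν + (d:ℝ)/2 - 1) = a ^ (ν - 1) * a ^ ((d:ℝ)/2) := by
        rw [← Real.rpow_add ha0]; congr 1; ring
      simp only [hhdef, hcdef, hsplit, hapow, mul_pow, div_pow]
      have hne1 : ((a + γ ^ 2 : ℝ) ^ k) ≠ 0 := by positivity
      have hne2 : ((Nat.factorial k : ℝ)) ≠ 0 := by positivity
      field_simp
    calc (1 / Real.Gamma ν) * Real.exp (-a) * a ^ (ν - 1) *
        (((σ * Real.sqrt (2 * π)) ^ d)⁻¹ * (a ^ ((d:ℝ)/2) * (a + γ ^ 2) ^ (-(d:ℝ)/2))) *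
        (Real.exp (-x / (2 * σ ^ 2)) *
          ∑' k : ℕ, (q * (γ ^ 2 / (a + γ ^ 2))) ^ k / (Nat.factorial k))
        = ((1 / Real.Gamma ν) * Real.exp (-a) * a ^ (ν - 1) *
            (((σ * Real.sqrt (2 * π)) ^ d)⁻¹ * (a ^ ((d:ℝ)/2) * (a + γ ^ 2) ^ (-(d:ℝ)/2))) *
            Real.exp (-x / (2 * σ ^ 2))) *
          ∑' k : ℕ, (q * (γ ^ 2 / (a + γ ^ 2))) ^ k / (Nat.factorial k) := by ring
      _ = ∑' k : ℕ, (1 / Real.Gamma ν) * Real.exp (-a) * a ^ (ν - 1) *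
            (((σ * Real.sqrt (2 * π)) ^ d)⁻¹ * (a ^ ((d:ℝ)/2) * (a + γ ^ 2) ^ (-(d:ℝ)/2))) *
            Real.exp (-x / (2 * σ ^ 2)) * ((q * (γ ^ 2 / (a + γ ^ 2))) ^ k / (Nat.factorial k)) :=
          (tsum_mul_left).symm
      _ = ∑' k : ℕ, c k * h k a := tsum_congr perk
  -- now assemble
  calc (∫ a in Set.Ioi (0 : ℝ),
        (1 / Real.Gamma ν) * Real.exp (-a) * a ^ (ν - 1) *
          (2 * π * (σ ^ 2 + 1 / (2 * a))) ^ (-(d : ℝ) / 2) *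
          Real.exp (-x / (2 * (σ ^ 2 + 1 / (2 * a)))))
      = ∫ a in Set.Ioi (0:ℝ), ∑' k : ℕ, c k * h k a :=
        setIntegral_congr_fun measurableSet_Ioi key
    _ = ∑' k : ℕ, ∫ a in Set.Ioi (0:ℝ), c k * h k a :=
        (integral_tsum_of_summable_integral_norm hgint hsum).symm
    _ = _ := by
        apply tsum_congr
        intro k
        rw [integral_const_mul]
        have hΓk : Real.Gamma ((k:ℝ) + (d:ℝ)/2) ≠ 0 :=
          (Real.Gamma_pos_of_pos (by positivity)).ne'
        simp only [hcdef, hhdef]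
        rw [pow_mul]
        field_simp
end

section
/- For fixed γ > 0, ν > 1, d ≥ 1 and every k ≥ 1: α_k^{(ν,γ)} ≤ d γ²/(ν−1), where α_k^{(ν,γ)} = (Γ(k+d/2)/(k!Γ(d/2)Γ(ν))) γ^{2k} ∫_0^∞ e^{-a} a^{ν+d/2-1}(a+γ²)^{-k-d/2} da; in particular lim_{ν→∞} α_k^{(ν,γ)} = 0 for each k ≥ 1 and lim_{ν→∞} α_0^{(ν,γ)} = 1. -/
open Real MeasureTheory Filter

noncomputable def myC (x : ℝ) : ℕ → ℝ
  | 0 => 1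
  | (k+1) => myC x k * (x + k) / (k + 1)

lemma myC_succ (x : ℝ) (k : ℕ) : myC x (k+1) = myC x k * (x + k) / (k + 1) := rfl

lemma myC_nonneg {x : ℝ} (hx : 0 < x) (k : ℕ) : 0 ≤ myC x k := by
  induction k with
  | zero => norm_num [myC]
  | succ k ih =>
      have : (0:ℝ) ≤ x + k := by positivity
      rw [myC_succ]
      positivity

lemma myC_succ_mul (x : ℝ) (k : ℕ) :
    ((k:ℝ)+1) * myC x (k+1) = x * myC (x+1) k := by
  induction k with
  | zero => simp [myC]
  | succ k ih =>
      have hk : ((k:ℝ)+1) ≠ 0 := by positivity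
      have hk2 : ((k:ℝ)+1+1) ≠ 0 := by positivity
      have e1 := myC_succ x (k+1)
      have e2 := myC_succ (x+1) k
      push_cast at e1
      rw [e1, e2]
      field_simp
      push_cast
      linear_combination ((k:ℝ) + 1 + 1) * (x + 1 + (k:ℝ)) * ih

lemma gamma_eq_myC {x : ℝ} (hx : 0 < x) (k : ℕ) :
    Real.Gamma ((k:ℝ) + x) = (Nat.factorial k : ℝ) * Real.Gamma x * myC x k := by
  induction k with
  | zero => simp [myC]
  | succ k ih =>
      have h2 : ((k:ℝ) + x) ≠ 0 := by positivity
      have h1 : (((k+1 : ℕ)):ℝ) + x = ((k:ℝ) + x) + 1 := by push_cast; ring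
      rw [h1, Real.Gamma_add_one h2, ih, myC_succ, Nat.factorial_succ]
      have hk : ((k:ℝ)+1) ≠ 0 := by positivity
      push_cast
      field_simp
      ring

lemma helper {x : ℝ} (hx : 0 < x) (c : ℝ) (k : ℕ)
    (h : ∀ t : ℝ, 0 ≤ t → t < 1 → ((k:ℝ)+1) * c * t^k ≤ x * (1-t) ^ (-(x+1))) :
    ∀ t : ℝ, 0 ≤ t → t < 1 → 1 + c * t^(k+1) ≤ (1-t) ^ (-x) := by
  intro t ht0 ht1
  set F : ℝ → ℝ := fun t => (1-t) ^ (-x) - c * t^(k+1) with hF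
  have hder : ∀ s ∈ Set.Ioo (0:ℝ) 1, HasDerivAt F
      (x * (1-s) ^ (-(x+1)) - ((k:ℝ)+1) * c * s^k) s := by
    intro s hs
    have hs1 : (0:ℝ) < 1 - s := by linarith [hs.2]
    have d1 : HasDerivAt (fun u : ℝ => 1 - u) (-1) s := by
      simpa using (hasDerivAt_id s).const_sub 1
    have d2 := (Real.hasDerivAt_rpow_const (x := 1 - s) (p := -x) (Or.inl hs1.ne')).comp s d1
    have d3 : HasDerivAt (fun u : ℝ => c * u^(k+1)) (c * (((k:ℕ)+1 : ℕ) * s^k)) s :=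
      (hasDerivAt_pow (k+1) s).const_mul c
    have d4 := d2.sub d3
    refine d4.congr_deriv ?_
    have : -x - 1 = -(x+1) := by ring
    rw [this]
    push_cast
    ring
  have hmono : MonotoneOn F (Set.Ico (0:ℝ) 1) := by
    apply monotoneOn_of_deriv_nonneg (convex_Ico 0 1)
    · apply ContinuousOn.sub
      · apply ContinuousOn.rpow_const (Continuous.continuousOn (by continuity))
        intro s hs
        exact Or.inl (by simp only [Set.mem_Ico] at hs; intro hc; nlinarith [hs.2])
      · exact (continuous_const.mul (continuous_pow _)).continuousOn
    · intro s hs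
      rw [interior_Ico] at hs
      exact (hder s hs).differentiableAt.differentiableWithinAt
    · intro s hs
      rw [interior_Ico] at hs
      rw [(hder s hs).deriv]
      have := h s hs.1.le hs.2
      linarith
  have h0 : F 0 ≤ F t := hmono (by simp) (by simp [ht0, ht1]) ht0
  have hF0 : F 0 = 1 := by simp [hF]
  rw [hF0] at h0
  simp only [hF] at h0
  linarith

lemma key (k : ℕ) : ∀ x : ℝ, 0 < x → ∀ t : ℝ, 0 ≤ t → t < 1 →
    myC x k * t^k ≤ (1-t) ^ (-x) := by
  induction k with
  | zero =>
      intro x hx t ht0 ht1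
      rw [show myC x 0 = 1 from rfl]
      simp only [pow_zero, mul_one]
      exact Real.one_le_rpow_of_pos_of_le_one_of_nonpos (by linarith) (by linarith) (by linarith)
  | succ k ih =>
      intro x hx t ht0 ht1
      have h1 := helper hx (myC x (k+1)) k (fun u hu0 hu1 => by
        rw [myC_succ_mul x k, mul_assoc]
        exact mul_le_mul_of_nonneg_left (ih (x+1) (by linarith) u hu0 hu1) hx.le)
      linarith [h1 t ht0 ht1]

lemma key1 {k : ℕ} (hk : 1 ≤ k) {x : ℝ} (hx : 0 < x) {t : ℝ} (ht0 : 0 ≤ t) (ht1 : t < 1) :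
    1 + myC x k * t^k ≤ (1-t) ^ (-x) := by
  obtain ⟨m, rfl⟩ : ∃ m, k = m + 1 := ⟨k - 1, by omega⟩
  exact helper hx (myC x (m+1)) m (fun u hu0 hu1 => by
    rw [myC_succ_mul x m, mul_assoc]
    exact mul_le_mul_of_nonneg_left (key m (x+1) (by linarith) u hu0 hu1) hx.le) t ht0 ht1

lemma one_sub_rpow_le {s : ℝ} (hs0 : 0 < s) (hs1 : s ≤ 1) {x : ℝ} (hx : 1 ≤ x ∨ x = 1/2) :
    1 - s ^ x ≤ x * (1-s) / s := by
  have hx0 : 0 < x := by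
    rcases hx with h | h
    · linarith
    · rw [h]; norm_num
  rcases hx with h | h
  · have hb := one_add_mul_self_le_rpow_one_add (s := s-1) (by linarith) h
    have he : (1 + (s-1)) = s := by ring
    rw [he] at hb
    rw [le_div_iff₀ hs0]
    nlinarith [hb, mul_nonneg hx0.le (sub_nonneg.mpr hs1), sq_nonneg (1-s)]
  · subst h
    rw [← Real.sqrt_eq_rpow]
    have hu0 : 0 ≤ Real.sqrt s := Real.sqrt_nonneg s
    have hu1 : Real.sqrt s ≤ 1 := by
      rw [show (1:ℝ) = Real.sqrt 1 from (Real.sqrt_one).symm]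
      exact Real.sqrt_le_sqrt hs1
    have hu2 : Real.sqrt s ^ 2 = s := Real.sq_sqrt hs0.le
    rw [le_div_iff₀ hs0]
    nlinarith [mul_nonneg (sq_nonneg (1 - Real.sqrt s)) (by linarith : (0:ℝ) ≤ 1 + 2*Real.sqrt s)]

lemma xcases {d : ℕ} (hd : 1 ≤ d) : 1 ≤ (d:ℝ)/2 ∨ (d:ℝ)/2 = 1/2 := by
  rcases Nat.lt_or_ge d 2 with h | h
  · right
    interval_cases d
    norm_num
  · left
    have : (2:ℝ) ≤ d := by exact_mod_cast h
    linarith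

lemma one_sub_sx_le {γ : ℝ} (hγ : 0 < γ) {d : ℕ} (hd : 1 ≤ d) {a : ℝ} (ha : 0 < a) :
    1 - (a/(a+γ^2)) ^ ((d:ℝ)/2) ≤ ((d:ℝ)/2) * γ^2 / a := by
  have hγ2 : (0:ℝ) < γ^2 := by positivity
  have hb : 0 < a + γ^2 := by positivity
  have hs0 : (0:ℝ) < a/(a+γ^2) := by positivity
  have hs1 : a/(a+γ^2) < 1 := by rw [div_lt_one hb]; linarith
  have h := one_sub_rpow_le hs0 hs1.le (xcases hd)
  have he : ((d:ℝ)/2) * (1 - a/(a+γ^2)) / (a/(a+γ^2)) = ((d:ℝ)/2) * γ^2 / a := by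
    field_simp
    ring
  rwa [he] at h

lemma numeric {γ : ℝ} (hγ : 0 < γ) {d : ℕ} (hd : 1 ≤ d) {k : ℕ} (hk : 1 ≤ k) {a : ℝ}
    (ha : 0 < a) :
    myC ((d:ℝ)/2) k * (γ^2/(a+γ^2))^k * (a/(a+γ^2)) ^ ((d:ℝ)/2) * a ≤ (d:ℝ) * γ^2 := by
  set x : ℝ := (d:ℝ)/2 with hxdef
  have hx : 0 < x := by positivity
  have hγ2 : (0:ℝ) < γ^2 := by positivity
  have hb : 0 < a + γ^2 := by positivity
  set t : ℝ := γ^2/(a+γ^2) with htdef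
  set s : ℝ := a/(a+γ^2) with hsdef
  have ht0 : 0 ≤ t := by positivity
  have hs0 : 0 < s := by positivity
  have ht1 : t < 1 := by rw [htdef, div_lt_one hb]; linarith
  have hst : 1 - t = s := by rw [htdef, hsdef]; field_simp; ring
  have h1 : myC x k * t^k ≤ s ^ (-x) - 1 := by
    have := key1 hk hx ht0 ht1
    rw [hst] at this
    linarith
  have hsx : (0:ℝ) < s ^ x := Real.rpow_pos_of_pos hs0 x
  have h2 : myC x k * t^k * s^x ≤ 1 - s^x := by
    have hm := mul_le_mul_of_nonneg_right h1 hsx.le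
    have he : (s^(-x) - 1) * s^x = 1 - s^x := by
      rw [sub_mul, ← Real.rpow_add hs0]
      simp
    rw [he] at hm
    exact hm
  have h3 : 1 - s^x ≤ x * γ^2 / a := one_sub_sx_le hγ hd ha
  have h4 : myC x k * t^k * s^x * a ≤ (1 - s^x) * a :=
    mul_le_mul_of_nonneg_right h2 ha.le
  have h5 : (1 - s^x) * a ≤ x * γ^2 := by
    have := mul_le_mul_of_nonneg_right h3 ha.le
    rwa [div_mul_cancel₀] at this
    exact ha.ne'
  have h6 : x * γ^2 ≤ (d:ℝ) * γ^2 := by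
    have hxd : x ≤ (d:ℝ) := by
      rw [hxdef]
      have : (0:ℝ) ≤ d := by positivity
      linarith
    nlinarith [sq_nonneg γ]
  linarith

lemma decomp {γ : ℝ} (hγ : 0 < γ) {d : ℕ} (hd : 1 ≤ d) (ν : ℝ) (hΓν : Real.Gamma ν ≠ 0)
    (k : ℕ) {a : ℝ} (ha : 0 < a) :
    Real.Gamma ((k:ℝ) + (d:ℝ)/2) /
        ((Nat.factorial k : ℝ) * Real.Gamma ((d:ℝ)/2) * Real.Gamma ν) * γ^(2*k) *
      (Real.exp (-a) * a ^ (ν + (d:ℝ)/2 - 1) * (a + γ^2) ^ (-(k:ℝ) - (d:ℝ)/2))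
    = (Real.Gamma ν)⁻¹ * (Real.exp (-a) * a ^ (ν - 1 - 1)) *
      (myC ((d:ℝ)/2) k * (γ^2/(a+γ^2))^k * (a/(a+γ^2)) ^ ((d:ℝ)/2) * a) := by
  set x : ℝ := (d:ℝ)/2 with hxdef
  have hx : 0 < x := by positivity
  have hb : 0 < a + γ^2 := by positivity
  have e1 : a ^ (ν + x - 1) = a ^ (ν - 1 - 1) * a ^ x * a := by
    rw [show ν + x - 1 = ((ν - 1 - 1) + x) + 1 by ring, Real.rpow_add ha,
      Real.rpow_add ha, Real.rpow_one]
  have e2 : (a + γ^2) ^ (-(k:ℝ) - x) = ((a+γ^2) ^ k)⁻¹ * ((a+γ^2) ^ x)⁻¹ := by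
    rw [show -(k:ℝ) - x = (-(k:ℝ)) + (-x) by ring, Real.rpow_add hb, Real.rpow_neg hb.le,
      Real.rpow_neg hb.le, Real.rpow_natCast]
  have e3 : (γ^2/(a+γ^2))^k = γ^(2*k) / (a+γ^2)^k := by rw [div_pow, pow_mul]
  have e4 : (a/(a+γ^2)) ^ x = a ^ x / (a+γ^2) ^ x := Real.div_rpow ha.le hb.le _
  have hbk : ((a+γ^2) ^ k) ≠ 0 := by positivity
  have hbx : ((a+γ^2) ^ x) ≠ 0 := (Real.rpow_pos_of_pos hb x).ne'
  have hΓx : Real.Gamma x ≠ 0 := (Real.Gamma_pos_of_pos hx).ne'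
  have hfk : (Nat.factorial k : ℝ) ≠ 0 := by positivity
  rw [e1, e2, e3, e4, gamma_eq_myC hx]
  field_simp

lemma integral_bound {p : ℝ} (hp : 0 < p) {F : ℝ → ℝ} {C : ℝ}
    (hle : ∀ a ∈ Set.Ioi (0:ℝ), ‖F a‖ ≤ C * (Real.exp (-a) * a ^ (p - 1))) :
    ∫ a in Set.Ioi (0:ℝ), F a ≤ C * Real.Gamma p := by
  have hint : Integrable (fun a => C * (Real.exp (-a) * a ^ (p-1)))
      (volume.restrict (Set.Ioi 0)) :=
    (Real.GammaIntegral_convergent hp).const_mul C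
  have h1 : ‖∫ a in Set.Ioi (0:ℝ), F a‖ ≤
      ∫ a in Set.Ioi (0:ℝ), C * (Real.exp (-a) * a ^ (p-1)) := by
    apply norm_integral_le_of_norm_le hint
    filter_upwards [ae_restrict_mem measurableSet_Ioi] with a ha using hle a ha
  have h2 : ∫ a in Set.Ioi (0:ℝ), C * (Real.exp (-a) * a ^ (p-1))
      = C * Real.Gamma p := by
    rw [MeasureTheory.integral_const_mul, ← Real.Gamma_eq_integral hp]
  calc ∫ a in Set.Ioi (0:ℝ), F a ≤ ‖∫ a in Set.Ioi (0:ℝ), F a‖ :=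
        (Real.norm_eq_abs _) ▸ le_abs_self _
    _ ≤ _ := h1
    _ = C * Real.Gamma p := h2

lemma limc (c : ℝ) : Tendsto (fun ν : ℝ => c/(ν-1)) atTop (nhds 0) := by
  apply Tendsto.div_atTop tendsto_const_nhds
  have := tendsto_atTop_add_const_right atTop (-1 : ℝ) tendsto_id
  simpa [sub_eq_add_neg] using this

theorem alpha_k_bound_and_limits (γ : ℝ) (hγ : 0 < γ) (d : ℕ) (hd : 1 ≤ d)
    (α : ℝ → ℕ → ℝ)
    (hα : ∀ (ν : ℝ) (k : ℕ), α ν k =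
      Real.Gamma ((k : ℝ) + (d : ℝ) / 2) /
          ((Nat.factorial k : ℝ) * Real.Gamma ((d : ℝ) / 2) * Real.Gamma ν) *
        γ ^ (2 * k) *
        ∫ a in Set.Ioi (0 : ℝ),
          Real.exp (-a) * a ^ (ν + (d : ℝ) / 2 - 1) * (a + γ ^ 2) ^ (-(k : ℝ) - (d : ℝ) / 2)) :
    (∀ ν : ℝ, 1 < ν → ∀ k : ℕ, 1 ≤ k → α ν k ≤ (d : ℝ) * γ ^ 2 / (ν - 1)) ∧
      (∀ k : ℕ, 1 ≤ k → Tendsto (fun ν : ℝ => α ν k) atTop (nhds 0)) ∧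
      Tendsto (fun ν : ℝ => α ν 0) atTop (nhds 1) := by
  have hx : (0:ℝ) < (d:ℝ)/2 := by positivity
  have hγ2 : (0:ℝ) < γ^2 := by positivity
  set x : ℝ := (d:ℝ)/2 with hxdef
  -- main bound
  have main : ∀ ν : ℝ, 1 < ν → ∀ k : ℕ, 1 ≤ k → α ν k ≤ (d:ℝ) * γ^2 / (ν-1) := by
    intro ν hν k hk
    have hν0 : 0 < ν := by linarith
    have hΓν : 0 < Real.Gamma ν := Real.Gamma_pos_of_pos hν0
    have hν1 : 0 < ν - 1 := by linarith
    have hΓν1 : 0 < Real.Gamma (ν-1) := Real.Gamma_pos_of_pos hν1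
    have hGam : Real.Gamma ν = (ν-1) * Real.Gamma (ν-1) := by
      have h := Real.Gamma_add_one (s := ν - 1) hν1.ne'
      rw [show ν - 1 + 1 = ν by ring] at h
      exact h
    rw [hα, ← MeasureTheory.integral_const_mul]
    refine le_trans (integral_bound (p := ν - 1) hν1
      (C := (d:ℝ)*γ^2 / Real.Gamma ν) ?_) (le_of_eq ?_)
    · intro a ha
      simp only [Set.mem_Ioi] at ha
      rw [decomp hγ hd ν hΓν.ne' k ha]
      have hN := numeric hγ hd hk ha
      have hmyC := myC_nonneg hx k
      have hNn : 0 ≤ myC x k * (γ^2/(a+γ^2))^k * (a/(a+γ^2)) ^ x * a := by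
        have hb : (0:ℝ) < a + γ^2 := by positivity
        exact mul_nonneg (mul_nonneg (mul_nonneg hmyC (by positivity))
          (Real.rpow_nonneg (by positivity) _)) ha.le
      have hbase : (0:ℝ) ≤ (Real.Gamma ν)⁻¹ * (Real.exp (-a) * a ^ (ν-1-1)) := by
        have := hΓν
        positivity
      rw [Real.norm_eq_abs, abs_of_nonneg (mul_nonneg hbase hNn)]
      calc (Real.Gamma ν)⁻¹ * (Real.exp (-a) * a ^ (ν-1-1)) *
            (myC x k * (γ^2/(a+γ^2))^k * (a/(a+γ^2)) ^ x * a)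
          ≤ (Real.Gamma ν)⁻¹ * (Real.exp (-a) * a ^ (ν-1-1)) * ((d:ℝ)*γ^2) :=
            mul_le_mul_of_nonneg_left hN hbase
        _ = (d:ℝ)*γ^2 / Real.Gamma ν * (Real.exp (-a) * a ^ (ν-1-1)) := by ring
    · rw [hGam]
      field_simp
  have nonneg : ∀ ν : ℝ, 0 < ν → ∀ k : ℕ, 0 ≤ α ν k := by
    intro ν hν0 k
    have hΓν : 0 < Real.Gamma ν := Real.Gamma_pos_of_pos hν0
    rw [hα]
    apply mul_nonneg (mul_nonneg _ (by positivity))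
    · apply MeasureTheory.setIntegral_nonneg measurableSet_Ioi
      intro a ha
      simp only [Set.mem_Ioi] at ha
      have hb : (0:ℝ) < a + γ^2 := by positivity
      exact mul_nonneg (mul_nonneg (Real.exp_nonneg _) (Real.rpow_nonneg ha.le _))
        (Real.rpow_nonneg hb.le _)
    · apply div_nonneg (Real.Gamma_pos_of_pos (by positivity)).le
      exact mul_nonneg (mul_nonneg (by positivity) (Real.Gamma_pos_of_pos hx).le) hΓν.le
  refine ⟨main, ?_, ?_⟩
  · intro k hk
    apply tendsto_of_tendsto_of_tendsto_of_le_of_le' tendsto_const_nhds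
      (limc ((d:ℝ)*γ^2))
    · filter_upwards [eventually_gt_atTop (1:ℝ)] with ν hν using nonneg ν (by linarith) k
    · filter_upwards [eventually_gt_atTop (1:ℝ)] with ν hν using main ν hν k hk
  · -- k = 0 case
    have bounds0 : ∀ ν : ℝ, 1 < ν →
        1 - x*γ^2/(ν-1) ≤ α ν 0 ∧ α ν 0 ≤ 1 := by
      intro ν hν
      have hν0 : 0 < ν := by linarith
      have hΓν : 0 < Real.Gamma ν := Real.Gamma_pos_of_pos hν0
      have hν1 : 0 < ν - 1 := by linarith
      have hΓν1 : 0 < Real.Gamma (ν-1) := Real.Gamma_pos_of_pos hν1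
      have hGam : Real.Gamma ν = (ν-1) * Real.Gamma (ν-1) := by
        have h := Real.Gamma_add_one (s := ν - 1) hν1.ne'
        rw [show ν - 1 + 1 = ν by ring] at h
        exact h
      set K : ℝ := Real.Gamma (((0:ℕ):ℝ) + x) /
          ((Nat.factorial 0 : ℝ) * Real.Gamma x * Real.Gamma ν) * γ ^ (2*0) with hK
      set F : ℝ → ℝ := fun a => K *
          (Real.exp (-a) * a ^ (ν + x - 1) * (a + γ^2) ^ (-((0:ℕ):ℝ) - x)) with hF
      set G : ℝ → ℝ := fun a => (Real.Gamma ν)⁻¹ * (Real.exp (-a) * a ^ (ν - 1)) with hG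
      have hα0 : α ν 0 = ∫ a in Set.Ioi (0:ℝ), F a := by
        rw [hα, ← MeasureTheory.integral_const_mul]
      have hdec : ∀ a : ℝ, 0 < a → F a = (Real.Gamma ν)⁻¹ *
          (Real.exp (-a) * a ^ (ν - 1 - 1)) * ((a/(a+γ^2)) ^ x * a) := by
        intro a ha
        have h := decomp hγ hd ν hΓν.ne' 0 ha
        rw [hF]
        simp only [pow_zero, one_mul, myC] at h ⊢
        rw [h]
      have hGd : ∀ a : ℝ, 0 < a → G a = (Real.Gamma ν)⁻¹ *
          (Real.exp (-a) * a ^ (ν - 1 - 1)) * a := by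
        intro a ha
        have e : a ^ (ν - 1) = a ^ (ν - 1 - 1) * a := by
          rw [← Real.rpow_add_one ha.ne' (ν-1-1)]
          norm_num
        simp only [hG]
        rw [e]
        ring
      have hFG : ∀ a ∈ Set.Ioi (0:ℝ), 0 ≤ F a ∧ F a ≤ G a := by
        intro a ha
        simp only [Set.mem_Ioi] at ha
        have hb : (0:ℝ) < a + γ^2 := by positivity
        have hs0 : (0:ℝ) ≤ a/(a+γ^2) := by positivity
        have hs1 : a/(a+γ^2) ≤ 1 := by
          rw [div_le_one hb]; linarith
        have hsx1 : (a/(a+γ^2)) ^ x ≤ 1 := Real.rpow_le_one hs0 hs1 hx.le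
        have hsx0 : (0:ℝ) ≤ (a/(a+γ^2)) ^ x := Real.rpow_nonneg hs0 _
        have hbase : (0:ℝ) ≤ (Real.Gamma ν)⁻¹ * (Real.exp (-a) * a ^ (ν-1-1)) := by
          positivity
        constructor
        · rw [hdec a ha]
          exact mul_nonneg hbase (mul_nonneg hsx0 ha.le)
        · rw [hdec a ha, hGd a ha]
          have : (a/(a+γ^2)) ^ x * a ≤ a := by
            nlinarith
          exact mul_le_mul_of_nonneg_left this hbase
      have hGint : Integrable G (volume.restrict (Set.Ioi 0)) :=
        (Real.GammaIntegral_convergent hν0).const_mul _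
      have hGval : ∫ a in Set.Ioi (0:ℝ), G a = 1 := by
        rw [hG, MeasureTheory.integral_const_mul, ← Real.Gamma_eq_integral hν0,
          inv_mul_cancel₀ hΓν.ne']
      have hFcont : ContinuousOn F (Set.Ioi (0:ℝ)) := by
        apply ContinuousOn.mul continuousOn_const
        apply ContinuousOn.mul
        · apply ContinuousOn.mul
          · exact (Real.continuous_exp.comp continuous_neg).continuousOn
          · exact ContinuousOn.rpow_const continuousOn_id
              (fun a ha => Or.inl (ne_of_gt ha))
        · exact ContinuousOn.rpow_const ((continuous_id.add continuous_const).continuousOn)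
            (fun a ha => Or.inl (by
              simp only [Set.mem_Ioi] at ha
              positivity))
      have hFint : Integrable F (volume.restrict (Set.Ioi 0)) := by
        apply Integrable.mono' hGint
          (hFcont.aestronglyMeasurable measurableSet_Ioi)
        filter_upwards [ae_restrict_mem measurableSet_Ioi] with a ha
        obtain ⟨h1, h2⟩ := hFG a ha
        rw [Real.norm_eq_abs, abs_of_nonneg h1]
        exact h2
      constructor
      · -- lower bound
        have hsub : 1 - α ν 0 = ∫ a in Set.Ioi (0:ℝ), (G a - F a) := by
          rw [MeasureTheory.integral_sub hGint hFint, hGval, hα0]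
        have hle : 1 - α ν 0 ≤ x*γ^2/(ν-1) := by
          rw [hsub]
          refine le_trans (integral_bound (p := ν-1) hν1
            (C := x*γ^2 / Real.Gamma ν) ?_) (le_of_eq ?_)
          · intro a ha
            simp only [Set.mem_Ioi] at ha
            obtain ⟨h1, h2⟩ := hFG a ha
            rw [Real.norm_eq_abs, abs_of_nonneg (by linarith)]
            rw [hdec a ha, hGd a ha]
            have hb : (0:ℝ) < a + γ^2 := by positivity
            have hs : (1 - (a/(a+γ^2)) ^ x) * a ≤ x * γ^2 := by
              have h3 := one_sub_sx_le hγ hd ha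
              have := mul_le_mul_of_nonneg_right h3 ha.le
              rwa [div_mul_cancel₀ _ ha.ne'] at this
            have hbase : (0:ℝ) ≤ (Real.Gamma ν)⁻¹ * (Real.exp (-a) * a ^ (ν-1-1)) := by
              positivity
            calc (Real.Gamma ν)⁻¹ * (Real.exp (-a) * a ^ (ν-1-1)) * a -
                  (Real.Gamma ν)⁻¹ * (Real.exp (-a) * a ^ (ν-1-1)) * ((a/(a+γ^2)) ^ x * a)
                = (Real.Gamma ν)⁻¹ * (Real.exp (-a) * a ^ (ν-1-1)) *
                  ((1 - (a/(a+γ^2)) ^ x) * a) := by ring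
              _ ≤ (Real.Gamma ν)⁻¹ * (Real.exp (-a) * a ^ (ν-1-1)) * (x * γ^2) :=
                  mul_le_mul_of_nonneg_left hs hbase
              _ = x*γ^2 / Real.Gamma ν * (Real.exp (-a) * a ^ (ν-1-1)) := by ring
          · rw [hGam]
            field_simp
        linarith
      · -- upper bound
        have : α ν 0 ≤ ∫ a in Set.Ioi (0:ℝ), G a := by
          rw [hα0]
          exact MeasureTheory.setIntegral_mono_on hFint hGint measurableSet_Ioi
            (fun a ha => (hFG a ha).2)
        rwa [hGval] at this
    have hlow : Tendsto (fun ν : ℝ => 1 - x*γ^2/(ν-1)) atTop (nhds 1) := by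
      have := tendsto_const_nhds (α := ℝ) (x := (1:ℝ)) (f := atTop) |>.sub (limc (x*γ^2))
      simpa using this
    apply tendsto_of_tendsto_of_tendsto_of_le_of_le' hlow tendsto_const_nhds
    · filter_upwards [eventually_gt_atTop (1:ℝ)] with ν hν using (bounds0 ν hν).1
    · filter_upwards [eventually_gt_atTop (1:ℝ)] with ν hν using (bounds0 ν hν).2
end

section
/- For ν > 0, σ > 0, d ≥ 1, and k ∈ ℕ, the quantity τ_k = ((σ√2)^d/Γ(ν)) ∫_0^∞ s^{ν+d/2-1} e^{-s} (1 + 2σ²s)^{-k-d/2} ds is a Hausdorff moment sequence: τ_k = ∫_0^1 u^k dμ(u), where dμ(u) = (1/((2σ²)^ν Γ(ν))) u^{-ν-1}(1-u)^{ν+d/2-1} exp(−(1−u)/(2σ²u)) du (a positive finite measure on (0,1)). -/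
open Real MeasureTheory

theorem tau_hausdorff_moment (ν σ : ℝ) (hν : 0 < ν) (hσ : 0 < σ) (d : ℕ) (hd : 1 ≤ d) (k : ℕ) :
    ((σ * Real.sqrt 2) ^ d / Real.Gamma ν) *
        ∫ s in Set.Ioi (0 : ℝ),
          s ^ (ν + (d : ℝ) / 2 - 1) * Real.exp (-s) *
            (1 + 2 * σ ^ 2 * s) ^ (-(k : ℝ) - (d : ℝ) / 2) =
      ∫ u in (0 : ℝ)..1,
        u ^ k *
          (1 / ((2 * σ ^ 2) ^ ν * Real.Gamma ν) *
            ((1 - u) ^ (ν + (d : ℝ) / 2 - 1) / u ^ (ν + 1)) *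
            Real.exp (-(1 - u) / (2 * σ ^ 2 * u))) := by
  have hA : (0:ℝ) < 2 * σ ^ 2 := by positivity
  set A : ℝ := 2 * σ ^ 2 with hAdef
  set e : ℝ := ν + (d : ℝ) / 2 - 1 with hedef
  set g : ℝ → ℝ := fun u => u ^ k *
      (1 / (A ^ ν * Real.Gamma ν) * ((1 - u) ^ e / u ^ (ν + 1)) *
        Real.exp (-(1 - u) / (A * u))) with hgdef
  set f : ℝ → ℝ := fun s => 1 / (1 + A * s) with hfdef
  have hGamma : (0:ℝ) < Real.Gamma ν := Real.Gamma_pos_of_pos hν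
  -- image
  have himg : f '' Set.Ioi 0 = Set.Ioo 0 1 := by
    ext u
    constructor
    · rintro ⟨s, hs, rfl⟩
      have hs' : (0:ℝ) < s := hs
      have ht : (1:ℝ) < 1 + A * s := by nlinarith
      have ht0 : (0:ℝ) < 1 + A * s := by linarith
      exact ⟨by positivity, by rw [div_lt_one ht0]; linarith⟩
    · rintro ⟨hu0, hu1⟩
      refine ⟨(1 - u) / (A * u), ?_, ?_⟩
      · have h1u : (0:ℝ) < 1 - u := by linarith
        exact div_pos h1u (by positivity)
      · show 1 / (1 + A * ((1 - u) / (A * u))) = u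
        have hu0' : u ≠ 0 := ne_of_gt hu0
        field_simp
        ring
  -- derivative
  have hderiv : ∀ s ∈ Set.Ioi (0:ℝ),
      HasDerivWithinAt f (-A / (1 + A * s) ^ 2) (Set.Ioi 0) s := by
    intro s hs
    have hs' : (0:ℝ) < s := hs
    have ht0 : (1 + A * s) ≠ 0 := by positivity
    have h1 : HasDerivAt (fun s : ℝ => 1 + A * s) A s := by
      simpa using ((hasDerivAt_id s).const_mul A).const_add 1
    have h2 := h1.inv ht0
    have : HasDerivAt f (-A / (1 + A * s) ^ 2) s := by
      simpa [hfdef, one_div, div_eq_mul_inv, Pi.inv_def] using h2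
    exact this.hasDerivWithinAt
  -- injectivity
  have hinj : Set.InjOn f (Set.Ioi 0) := by
    intro a ha b hb hab
    have ha' : (0:ℝ) < a := ha
    have hb' : (0:ℝ) < b := hb
    have h1 : 1 + A * a = 1 + A * b := by
      have h := hab
      simp only [hfdef, one_div] at h
      exact inv_injective h
    have h2 : A * a = A * b := by linarith
    exact mul_left_cancel₀ (ne_of_gt hA) h2
  have key := integral_image_eq_integral_abs_deriv_smul measurableSet_Ioi hderiv hinj g
  rw [himg] at key
  rw [intervalIntegral.integral_of_le zero_le_one, integral_Ioc_eq_integral_Ioo]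
  show _ = ∫ u in Set.Ioo (0:ℝ) 1, g u
  rw [key, ← MeasureTheory.integral_const_mul]
  apply MeasureTheory.setIntegral_congr_fun measurableSet_Ioi
  intro s hs
  have hs' : (0:ℝ) < s := hs
  have ht0 : (0:ℝ) < 1 + A * s := by positivity
  have htne : (1 + A * s) ≠ 0 := ne_of_gt ht0
  set t : ℝ := 1 + A * s with htdef
  -- simplify g (f s)
  have hfs : f s = 1 / t := rfl
  have h1u : 1 - f s = A * s / t := by rw [hfs]; field_simp; linarith [htdef]
  have hexp : -(1 - f s) / (A * f s) = -s := by
    rw [h1u, hfs]; field_simp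
  have habs : |(-A / t ^ 2)| = A / t ^ 2 := by
    rw [abs_div, abs_neg, abs_of_pos hA, abs_of_pos (by positivity : (0:ℝ) < t ^ 2)]
  -- rpow computations
  have hAs : (0:ℝ) < A * s := by positivity
  have hpow1 : (1 - f s) ^ e = A ^ e * s ^ e / t ^ e := by
    rw [h1u, Real.div_rpow hAs.le ht0.le, Real.mul_rpow hA.le hs'.le]
  have hpow2 : (f s) ^ (ν + 1) = (t ^ (ν + 1))⁻¹ := by
    rw [hfs, one_div, Real.inv_rpow ht0.le]
  have hpowk : (f s) ^ k = (t ^ k)⁻¹ := by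
    rw [hfs, one_div, inv_pow]
  -- main t-exponent split
  have hsplit : t ^ (-(k:ℝ) - (d:ℝ)/2) =
      (t ^ k)⁻¹ * (t ^ 2)⁻¹ * (t ^ e)⁻¹ * t ^ (ν + 1) := by
    rw [← Real.rpow_natCast t k, ← Real.rpow_natCast t 2,
      ← Real.rpow_neg ht0.le, ← Real.rpow_neg ht0.le, ← Real.rpow_neg ht0.le,
      ← Real.rpow_add ht0, ← Real.rpow_add ht0, ← Real.rpow_add ht0]
    congr 1
    push_cast
    rw [hedef]
    ring
  -- constant identity
  have hconst : (σ * Real.sqrt 2) ^ d = A * A ^ e / A ^ ν := by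
    have hA0 : A ≠ 0 := ne_of_gt hA
    have hAν0 : A ^ ν ≠ 0 := ne_of_gt (Real.rpow_pos_of_pos hA ν)
    have h1 : A * A ^ e / A ^ ν = A ^ ((d:ℝ)/2) := by
      have he : e = ν + (d:ℝ)/2 - 1 := rfl
      rw [he, Real.rpow_sub hA, Real.rpow_add hA, Real.rpow_one]
      field_simp
    have hsq : A ^ ((1:ℝ)/2) = σ * Real.sqrt 2 := by
      rw [← Real.sqrt_eq_rpow, hAdef,
        show 2*σ^2 = (σ*Real.sqrt 2)^2 from by
          rw [mul_pow, Real.sq_sqrt (by norm_num : (0:ℝ) ≤ 2)]; ring]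
      exact Real.sqrt_sq (by positivity)
    have h3 : A ^ ((d:ℝ)/2) = (σ * Real.sqrt 2) ^ d := by
      rw [show (d:ℝ)/2 = (1/2) * d from by ring, Real.rpow_mul hA.le, hsq,
        Real.rpow_natCast]
    rw [h1]; exact h3.symm
  -- final algebra
  show (σ * Real.sqrt 2) ^ d / Real.Gamma ν *
      (s ^ e * Real.exp (-s) * t ^ (-(k:ℝ) - (d:ℝ)/2)) =
    |(-A / t ^ 2)| • g (f s)
  rw [habs, smul_eq_mul, hgdef]
  simp only
  rw [hpow1, hpow2, hpowk, hexp, hsplit, hconst]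
  have hte : (0:ℝ) < t ^ e := Real.rpow_pos_of_pos ht0 e
  have htν : (0:ℝ) < t ^ (ν+1) := Real.rpow_pos_of_pos ht0 (ν+1)
  have hAν : (0:ℝ) < A ^ ν := Real.rpow_pos_of_pos hA ν
  have hAe : (0:ℝ) < A ^ e := Real.rpow_pos_of_pos hA e
  have htk : (0:ℝ) < (t:ℝ) ^ k := by positivity
  field_simp
end

section
/- Let μ, ν > 0, d ≥ 1, n ∈ ℕ. Then ∫_0^1 t^{μ+d/2-1}(1-t)^{ν+d/2-1}(1-t+t²)^n dt = ∫_{3/4}^1 u^n [ (1/2 − √(u−3/4))^{μ+d/2−1}(1/2 + √(u−3/4))^{ν+d/2−1} + (1/2 + √(u−3/4))^{μ+d/2−1}(1/2 − √(u−3/4))^{ν+d/2−1} ] du/(2√(u−3/4)); in particular, the sequence n ↦ ∫_0^1 t^{μ+d/2-1}(1-t)^{ν+d/2-1}(1-t+t²)^n dt is a Hausdorff moment sequence supported on [3/4, 1]. -/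
open Real MeasureTheory

lemma cn_aux_image : (fun t : ℝ => 1 - t + t ^ 2) '' Set.Ioo (1/2 : ℝ) 1 = Set.Ioo (3/4 : ℝ) 1 := by
  ext u
  constructor
  · rintro ⟨t, ⟨ht1, ht2⟩, rfl⟩
    dsimp only
    constructor
    · nlinarith [mul_pos (sub_pos.2 ht1) (sub_pos.2 ht1)]
    · nlinarith [mul_pos (by linarith : (0:ℝ) < t) (by linarith : (0:ℝ) < 1 - t)]
  · rintro ⟨hu1, hu2⟩
    refine ⟨1/2 + Real.sqrt (u - 3/4), ⟨?_, ?_⟩, ?_⟩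
    · have := Real.sqrt_pos.2 (by linarith : (0:ℝ) < u - 3/4)
      linarith
    · have : Real.sqrt (u - 3/4) < 1/2 := by
        rw [show (1:ℝ)/2 = Real.sqrt ((1/2)^2) by rw [Real.sqrt_sq]; norm_num]
        exact Real.sqrt_lt_sqrt (by linarith) (by norm_num; linarith)
      linarith
    · have hs : Real.sqrt (u - 3/4) ^ 2 = u - 3/4 := Real.sq_sqrt (by linarith)
      nlinarith [hs]

lemma cn_aux_image' : (fun t : ℝ => 1 - t) '' Set.Ioo (1/2 : ℝ) 1 = Set.Ioo (0 : ℝ) (1/2) := by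
  ext x
  constructor
  · rintro ⟨t, ⟨ht1, ht2⟩, rfl⟩; dsimp only; constructor <;> linarith
  · rintro ⟨h1, h2⟩; exact ⟨1 - x, ⟨by linarith, by linarith⟩, by ring⟩

lemma cn_aux_inj : Set.InjOn (fun t : ℝ => 1 - t + t ^ 2) (Set.Ioo (1/2 : ℝ) 1) := by
  rintro x ⟨hx, _⟩ y ⟨hy, _⟩ hxy
  simp only at hxy
  have h : (x - y) * (x + y - 1) = 0 := by nlinarith [hxy]
  rcases mul_eq_zero.1 h with h | h
  · linarith
  · linarith

lemma cn_aux_deriv (t : ℝ) : HasDerivAt (fun t : ℝ => 1 - t + t ^ 2) (2 * t - 1) t := by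
  have h := ((hasDerivAt_const t (1:ℝ)).sub (hasDerivAt_id t)).add (hasDerivAt_pow 2 t)
  convert h using 1 <;> try rfl
  · push_cast; ring

lemma cn_aux_sqrt {t : ℝ} (ht : 1/2 ≤ t) : Real.sqrt ((1 - t + t ^ 2) - 3/4) = t - 1/2 := by
  rw [show (1 - t + t ^ 2) - 3/4 = (t - 1/2)^2 by ring, Real.sqrt_sq (by linarith)]

lemma cn_aux_int1 {a b : ℝ} (ha : -1 < a) (n : ℕ) :
    IntervalIntegrable (fun t : ℝ => t ^ a * ((1 - t) ^ b * (1 - t + t ^ 2) ^ n)) volume 0 (1/2) := by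
  apply (intervalIntegral.intervalIntegrable_rpow' ha).mul_continuousOn
  apply ContinuousOn.mul
  · apply ContinuousOn.rpow_const (by fun_prop)
    intro x hx
    rw [Set.uIcc_of_le (by norm_num : (0:ℝ) ≤ 1/2)] at hx
    left
    have := hx.2
    intro h; linarith
  · fun_prop

lemma cn_aux_int2 {a b : ℝ} (ha : -1 < a) (n : ℕ) :
    IntervalIntegrable (fun t : ℝ => (1 - t) ^ a * (t ^ b * (1 - t + t ^ 2) ^ n)) volume (1/2) 1 := by
  have h0 : IntervalIntegrable (fun t : ℝ => (1 - t) ^ a) volume (1/2) 1 := by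
    have := (intervalIntegral.intervalIntegrable_rpow' (a := 0) (b := 1/2) ha).comp_sub_left 1
    norm_num at this
    exact this.symm
  apply h0.mul_continuousOn
  apply ContinuousOn.mul
  · apply ContinuousOn.rpow_const (by fun_prop)
    intro x hx
    rw [Set.uIcc_of_le (by norm_num : (1:ℝ)/2 ≤ 1)] at hx
    left
    have := hx.1
    intro h; linarith
  · fun_prop

theorem cn_integral_as_moment (ν μ : ℝ) (hν : 0 < ν) (hμ : 0 < μ) (d : ℕ) (hd : 1 ≤ d) (n : ℕ) :
    (∫ t in (0 : ℝ)..1,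
        t ^ (μ + (d : ℝ) / 2 - 1) * (1 - t) ^ (ν + (d : ℝ) / 2 - 1) * (1 - t + t ^ 2) ^ n) =
      (∫ u in (3 / 4 : ℝ)..1,
        u ^ n *
          (((1 / 2 - Real.sqrt (u - 3 / 4)) ^ (μ + (d : ℝ) / 2 - 1) *
              (1 / 2 + Real.sqrt (u - 3 / 4)) ^ (ν + (d : ℝ) / 2 - 1) +
            (1 / 2 + Real.sqrt (u - 3 / 4)) ^ (μ + (d : ℝ) / 2 - 1) *
              (1 / 2 - Real.sqrt (u - 3 / 4)) ^ (ν + (d : ℝ) / 2 - 1)) /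
            (2 * Real.sqrt (u - 3 / 4)))) ∧
      ∀ u ∈ Set.Ioo (3 / 4 : ℝ) 1,
        0 ≤ ((1 / 2 - Real.sqrt (u - 3 / 4)) ^ (μ + (d : ℝ) / 2 - 1) *
              (1 / 2 + Real.sqrt (u - 3 / 4)) ^ (ν + (d : ℝ) / 2 - 1) +
            (1 / 2 + Real.sqrt (u - 3 / 4)) ^ (μ + (d : ℝ) / 2 - 1) *
              (1 / 2 - Real.sqrt (u - 3 / 4)) ^ (ν + (d : ℝ) / 2 - 1)) /
            (2 * Real.sqrt (u - 3 / 4)) := by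
  have hd' : (1:ℝ) ≤ (d:ℝ) := by exact_mod_cast hd
  set a : ℝ := μ + (d : ℝ) / 2 - 1 with ha_def
  set b : ℝ := ν + (d : ℝ) / 2 - 1 with hb_def
  have haneg : (-1:ℝ) < a := by rw [ha_def]; linarith
  have hbneg : (-1:ℝ) < b := by rw [hb_def]; linarith
  constructor
  · -- the main change-of-variables identity
    -- integrability of the two pieces
    have int1 : IntervalIntegrable
        (fun t : ℝ => t ^ a * (1 - t) ^ b * (1 - t + t ^ 2) ^ n) volume 0 (1/2) := by
      have := cn_aux_int1 (b := b) haneg n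
      simpa [mul_assoc] using this
    have int2 : IntervalIntegrable
        (fun t : ℝ => t ^ a * (1 - t) ^ b * (1 - t + t ^ 2) ^ n) volume (1/2) 1 := by
      have := cn_aux_int2 (b := a) hbneg n
      have he : (fun t : ℝ => (1 - t) ^ b * (t ^ a * (1 - t + t ^ 2) ^ n)) =
          (fun t : ℝ => t ^ a * (1 - t) ^ b * (1 - t + t ^ 2) ^ n) := by
        funext t; ring
      rwa [he] at this
    -- split the LHS at 1/2
    rw [← intervalIntegral.integral_add_adjacent_intervals int1 int2]
    -- convert interval integrals to set integrals on Ioo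
    rw [intervalIntegral.integral_of_le (by norm_num : (0:ℝ) ≤ 1/2),
        intervalIntegral.integral_of_le (by norm_num : (1:ℝ)/2 ≤ 1),
        intervalIntegral.integral_of_le (by norm_num : (3:ℝ)/4 ≤ 1),
        MeasureTheory.integral_Ioc_eq_integral_Ioo,
        MeasureTheory.integral_Ioc_eq_integral_Ioo,
        MeasureTheory.integral_Ioc_eq_integral_Ioo]
    -- the first piece: substitute t ↦ 1 - t
    have step1 : (∫ t in Set.Ioo (0:ℝ) (1/2), t ^ a * (1 - t) ^ b * (1 - t + t ^ 2) ^ n)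
        = ∫ t in Set.Ioo (1/2:ℝ) 1, (1 - t) ^ a * t ^ b * (1 - t + t ^ 2) ^ n := by
      rw [← cn_aux_image',
        MeasureTheory.integral_image_eq_integral_abs_deriv_smul (measurableSet_Ioo)
          (f' := fun _ => (-1:ℝ))
          (fun x _ => by
            have : HasDerivAt (fun t : ℝ => 1 - t) (-1) x := by
              simpa using (hasDerivAt_id x).const_sub 1
            exact this.hasDerivWithinAt)
          (fun x _ y _ h => by linarith)]
      apply MeasureTheory.setIntegral_congr_fun (measurableSet_Ioo)
      intro t _
      simp only [smul_eq_mul, abs_neg, abs_one, one_mul]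
      rw [show (1:ℝ) - (1 - t) + (1 - t) ^ 2 = 1 - t + t ^ 2 from by ring,
        show (1:ℝ) - (1 - t) = t from by ring]
    rw [step1]
    -- the RHS: substitute u = 1 - t + t^2 on (1/2, 1)
    have step2 : (∫ u in Set.Ioo (3/4:ℝ) 1,
        u ^ n * (((1/2 - Real.sqrt (u - 3/4)) ^ a * (1/2 + Real.sqrt (u - 3/4)) ^ b +
            (1/2 + Real.sqrt (u - 3/4)) ^ a * (1/2 - Real.sqrt (u - 3/4)) ^ b) /
            (2 * Real.sqrt (u - 3/4))))
        = ∫ t in Set.Ioo (1/2:ℝ) 1,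
            (1 - t + t ^ 2) ^ n * ((1 - t) ^ a * t ^ b + t ^ a * (1 - t) ^ b) := by
      rw [← cn_aux_image,
        MeasureTheory.integral_image_eq_integral_abs_deriv_smul (measurableSet_Ioo)
          (f' := fun t => 2 * t - 1)
          (fun x _ => (cn_aux_deriv x).hasDerivWithinAt) cn_aux_inj]
      apply MeasureTheory.setIntegral_congr_fun (measurableSet_Ioo)
      rintro t ⟨ht1, ht2⟩
      have hs : Real.sqrt ((1 - t + t ^ 2) - 3/4) = t - 1/2 := cn_aux_sqrt (le_of_lt ht1)
      have e1 : (1:ℝ)/2 - (t - 1/2) = 1 - t := by ring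
      have e2 : (1:ℝ)/2 + (t - 1/2) = t := by ring
      have hne : (2:ℝ) * (t - 1/2) ≠ 0 := by intro h; nlinarith
      simp only [smul_eq_mul, hs, e1, e2, abs_of_pos (by linarith : (0:ℝ) < 2 * t - 1)]
      rw [show (2:ℝ) * t - 1 = 2 * (t - 1/2) by ring, mul_comm, mul_assoc,
        div_mul_cancel₀ _ hne]
    rw [step2]
    -- combine the two pieces
    have ii2' : IntegrableOn (fun t : ℝ => t ^ a * (1 - t) ^ b * (1 - t + t ^ 2) ^ n)
        (Set.Ioo (1/2:ℝ) 1) volume := by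
      have := (intervalIntegrable_iff.mp int2)
      rw [Set.uIoc_of_le (by norm_num : (1:ℝ)/2 ≤ 1)] at this
      exact this.mono_set Set.Ioo_subset_Ioc_self
    have ii1' : IntegrableOn (fun t : ℝ => (1 - t) ^ a * t ^ b * (1 - t + t ^ 2) ^ n)
        (Set.Ioo (1/2:ℝ) 1) volume := by
      have := (intervalIntegrable_iff.mp (cn_aux_int2 (b := b) haneg n))
      rw [Set.uIoc_of_le (by norm_num : (1:ℝ)/2 ≤ 1)] at this
      have h := this.mono_set Set.Ioo_subset_Ioc_self
      have he : (fun t : ℝ => (1 - t) ^ a * (t ^ b * (1 - t + t ^ 2) ^ n)) =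
          (fun t : ℝ => (1 - t) ^ a * t ^ b * (1 - t + t ^ 2) ^ n) := by
        funext t; ring
      rwa [he] at h
    rw [← MeasureTheory.integral_add ii1' ii2']
    apply MeasureTheory.setIntegral_congr_fun (measurableSet_Ioo)
    intro t _
    ring
  · -- nonnegativity of the density
    rintro u ⟨hu1, hu2⟩
    have h1 : 0 < Real.sqrt (u - 3/4) := Real.sqrt_pos.2 (by linarith)
    have h2 : Real.sqrt (u - 3/4) ≤ 1/2 := by
      rw [show (1:ℝ)/2 = Real.sqrt ((1/2)^2) by rw [Real.sqrt_sq]; norm_num]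
      exact Real.sqrt_le_sqrt (by norm_num; linarith)
    apply div_nonneg
    · apply add_nonneg
      · exact mul_nonneg (Real.rpow_nonneg (by linarith) _) (Real.rpow_nonneg (by linarith) _)
      · exact mul_nonneg (Real.rpow_nonneg (by linarith) _) (Real.rpow_nonneg (by linarith) _)
    · linarith
end
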